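/- arXiv:2101.04015 — 14 statements merged into one kernel-verified Lean document; each statement's English description precedes it below -/
import Mathlib

section
/- In a small category C, a morphism h : C' → C is a strict epimorphism if and only if there exists a funneling diagram F : D → C whose weakly terminal object D₀ satisfies F(D₀) = C', together with a colimit cocone on F with vertex C whose leg at D₀ is h. -/
open CategoryTheory CategoryTheory.Limits

universe w v u

/-- A morphism `h : D ⟶ X` is a strict epimorphism if every morphism `k : D ⟶ E`
coequalizing all parallel pairs coequalized by `h` factors uniquely through `h`. -/
def IsStrictEpi {C : Type u} [Category.{v} C] {D X : C} (h : D ⟶ X) : Prop :=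
  ∀ ⦃E : C⦄ (k : D ⟶ E),
    (∀ ⦃B : C⦄ (p q : B ⟶ D), p ≫ h = q ≫ h → p ≫ k = q ≫ k) →
    ∃! m : X ⟶ E, h ≫ m = k

section Funnel

variable {C : Type} [SmallCategory C] {C' X : C} (h : C' ⟶ X)

/-- Objects: a weakly terminal point `none`, plus one object for each parallel
pair coequalized by `h`. -/
def FunnelObj : Type :=
  Option {pq : Σ B : C, (B ⟶ C') × (B ⟶ C') // pq.2.1 ≫ h = pq.2.2 ≫ h}

def FunnelHom : FunnelObj h → FunnelObj h → Type
  | none, none => PUnit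
  | some _, none => Bool
  | none, some _ => PEmpty
  | some x, some y => PLift (x = y)

instance : SmallCategory (FunnelObj h) where
  Hom := FunnelHom h
  id a := match a with
    | none => PUnit.unit
    | some _ => PLift.up rfl
  comp {a b c} f g := match a, b, c, f, g with
    | none, none, none, _, _ => PUnit.unit
    | none, none, some _, _, g => g.elim
    | none, some _, _, f, _ => f.elim
    | some _, none, none, f, _ => f
    | some _, none, some _, _, g => g.elim
    | some _, some _, none, _, g => g
    | some _, some _, some _, f, g => PLift.up (f.down.trans g.down)
  id_comp := by rintro (_|_) (_|_) f <;> cases f <;> rfl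
  comp_id := by rintro (_|_) (_|_) f <;> cases f <;> rfl
  assoc := by
    rintro (_|_) (_|_) (_|_) (_|_) f g k <;> cases f <;> cases g <;> cases k <;> rfl

def funnelF : FunnelObj h ⥤ C where
  obj a := match a with
    | none => C'
    | some x => x.1.1
  map {a b} f := match a, b, f with
    | none, none, _ => 𝟙 C'
    | some x, none, f => cond f x.1.2.1 x.1.2.2
    | some _, some _, f => eqToHom (by cases f.down; rfl)
  map_id := by rintro (_|_) <;> rfl
  map_comp := by
    rintro (_|_) (_|_) (_|_) f g <;> change FunnelHom h _ _ at f <;> change FunnelHom h _ _ at g <;>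
      cases f <;> cases g <;>
      first
        | exact (Category.comp_id _).symm
        | exact (Category.id_comp _).symm
        | (rename_i hh; cases hh; exact (Category.id_comp _).symm)
        | (rename_i h1 h2; cases h1; cases h2; exact (Category.id_comp _).symm)

def funnelCocone : Cocone (funnelF h) where
  pt := X
  ι :=
    { app := fun a => match a with
        | none => h
        | some x => x.1.2.1 ≫ h
      naturality := by
        intro a b f; simp only [Functor.const_obj_map]; revert a b f
        rintro (_|_) (_|_) f <;> change FunnelHom h _ _ at f <;> cases f <;>
          first
            | (simp [funnelF]; erw [Category.comp_id]; done)
            | (rename_i hh; cases hh; simp [funnelF]; erw [Category.comp_id]; done)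
            | (rename_i x; simp [funnelF]; erw [Category.comp_id]; exact x.2.symm) }

theorem funnel_coeq (s : Cocone (funnelF h)) ⦃B : C⦄ (p q : B ⟶ C')
    (w : p ≫ h = q ≫ h) :
    p ≫ s.ι.app none = q ≫ s.ι.app none := by
  let x : FunnelObj h := some ⟨⟨B, p, q⟩, w⟩
  have h1 := s.ι.naturality (show x ⟶ (none : FunnelObj h) from true)
  have h2 := s.ι.naturality (show x ⟶ (none : FunnelObj h) from false)
  simp [funnelF, x] at h1 h2
  exact h1.trans h2.symm

noncomputable def funnelIsColimit (hse : IsStrictEpi h) :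
    IsColimit (funnelCocone h) where
  desc s := (hse (s.ι.app none) (funnel_coeq h s)).choose
  fac s := by
    have hm := (hse (s.ι.app none) (funnel_coeq h s)).choose_spec.1
    rintro (_|x)
    · exact hm
    · let xo : FunnelObj h := some x
      have h1 := s.ι.naturality (show xo ⟶ (none : FunnelObj h) from true)
      simp [funnelF, xo] at h1
      erw [Functor.const_obj_map, Category.comp_id] at h1
      change (x.1.2.1 ≫ h) ≫ _ = _
      rw [Category.assoc]; erw [hm]; exact h1
  uniq s m hfac :=
    (hse (s.ι.app none) (funnel_coeq h s)).choose_spec.2 m (hfac none)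

end Funnel

theorem stmt4 {C : Type} [SmallCategory C] {C' X : C} (h : C' ⟶ X) :
    IsStrictEpi h ↔
      ∃ (D : Cat.{0, 0}) (d₀ : D) (F : D ⥤ C) (hobj : F.obj d₀ = C')
        (c : Limits.Cocone F) (hpt : c.pt = X),
        (∀ d : D, Nonempty (d ⟶ d₀)) ∧ Nonempty (IsColimit c) ∧
          c.ι.app d₀ = eqToHom hobj ≫ h ≫ eqToHom hpt.symm := by
  constructor
  · intro hse
    refine ⟨Cat.of (FunnelObj h), none, funnelF h, rfl, funnelCocone h, rfl,
      ?_, ⟨funnelIsColimit h hse⟩, by simp only [funnelCocone]; erw [eqToHom_refl, eqToHom_refl, Category.id_comp, Category.comp_id]⟩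
    rintro (_|x)
    · exact ⟨PUnit.unit⟩
    · exact ⟨show FunnelHom h (some x) none from true⟩
  · rintro ⟨D, d₀, F, hobj, c, hpt, wt, ⟨hc⟩, hleg⟩
    subst hobj; subst hpt
    simp at hleg
    intro E k hk
    have t : ∀ d : D, d ⟶ d₀ := fun d => (wt d).some
    have key : ∀ (d : D) (g : d ⟶ d₀), F.map g ≫ c.ι.app d₀ = c.ι.app d := by
      intro d g
      simpa using c.w g
    let s : Cocone F :=
      { pt := E
        ι :=
          { app := fun d => F.map (t d) ≫ k
            naturality := by
              intro d d' f
              have hcoeq : F.map (f ≫ t d') ≫ c.ι.app d₀ =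
                  F.map (t d) ≫ c.ι.app d₀ := by
                rw [key, key]
              rw [hleg] at hcoeq
              have h2 := hk _ _ hcoeq
              simp only [Functor.map_comp, Category.assoc] at h2
              simpa using h2 } }
    have hid : F.map (t d₀) ≫ k = k := by
      have hthis : F.map (t d₀) ≫ c.ι.app d₀ = 𝟙 _ ≫ c.ι.app d₀ := by
        rw [key]; simp
      rw [hleg] at hthis
      simpa using hk _ _ hthis
    refine ⟨hc.desc s, ?_, ?_⟩
    · have hfac := hc.fac s d₀
      rw [← hleg]
      simpa [s, hid] using hfac
    · intro m' hm'
      refine hc.uniq s m' ?_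
      intro d
      rw [← key d (t d), Category.assoc, hleg, hm']
end

section
/- A category has colimits of all multifunneling diagrams if and only if it has finite coproducts and colimits of all funneling diagrams. -/
open CategoryTheory CategoryTheory.Limits

universe w v u

/-- Adjoin a weakly terminal object to `D`, with `Hom d ⊤ = Σ i, (d ⟶ ds i)`. -/
def Funnelize {D : Type} [SmallCategory D] {n : ℕ} (ds : Fin n → D) : Type := Option D

instance funnelizeCat {D : Type} [SmallCategory D] {n : ℕ} (ds : Fin n → D) :
    SmallCategory (Funnelize ds) where
  Hom a b := match a, b with
    | some d, some d' => d ⟶ d'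
    | some d, none => Σ i, (d ⟶ ds i)
    | none, some _ => PEmpty
    | none, none => PUnit
  id a := match a with
    | some d => 𝟙 d
    | none => PUnit.unit
  comp {a b c} f g := match a, b, c, f, g with
    | some _, some _, some _, f, g => f ≫ g
    | some _, some _, none, f, ⟨i, g⟩ => ⟨i, f ≫ g⟩
    | some _, none, none, f, _ => f
    | none, none, none, _, _ => PUnit.unit
    | none, some _, _, f, _ => f.elim
    | none, none, some _, _, g => g.elim
    | some _, none, some _, _, g => g.elim
  id_comp {a b} f := match a, b, f with
    | some _, some _, f => Category.id_comp f
    | some _, none, ⟨i, g⟩ => congrArg (Sigma.mk i) (Category.id_comp g)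
    | none, some _, f => f.elim
    | none, none, _ => rfl
  comp_id {a b} f := match a, b, f with
    | some _, some _, f => Category.comp_id f
    | some _, none, ⟨i, g⟩ => rfl
    | none, some _, f => f.elim
    | none, none, _ => rfl
  assoc {a b c d} f g h := match a, b, c, d, f, g, h with
    | some _, some _, some _, some _, f, g, h => Category.assoc f g h
    | some _, some _, some _, none, f, g, ⟨i, k⟩ =>
        congrArg (Sigma.mk i) (Category.assoc f g k)
    | some _, some _, none, none, f, ⟨i, g⟩, _ => rfl
    | some _, none, none, none, f, _, _ => rfl
    | none, none, none, none, _, _, _ => rfl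
    | none, some _, _, _, f, _, _ => f.elim
    | some _, none, some _, _, _, g, _ => g.elim
    | none, none, some _, _, _, g, _ => g.elim
    | some _, some _, none, some _, _, _, h => h.elim
    | some _, none, none, some _, _, _, h => h.elim
    | none, none, none, some _, _, _, h => h.elim

def Funnelize.of {D : Type} [SmallCategory D] {n : ℕ} (ds : Fin n → D) (d : D) :
    Funnelize ds := some d

def Funnelize.top {D : Type} [SmallCategory D] {n : ℕ} (ds : Fin n → D) :
    Funnelize ds := none

def Funnelize.homOf {D : Type} [SmallCategory D] {n : ℕ} (ds : Fin n → D) {d d' : D}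
    (f : d ⟶ d') : Funnelize.of ds d ⟶ Funnelize.of ds d' := f

def Funnelize.toTop {D : Type} [SmallCategory D] {n : ℕ} (ds : Fin n → D) {d : D}
    (i : Fin n) (f : d ⟶ ds i) : Funnelize.of ds d ⟶ Funnelize.top ds := ⟨i, f⟩

noncomputable def funnelizeExt {C : Type u} [Category.{v} C] {D : Type} [SmallCategory D]
    {n : ℕ} (ds : Fin n → D) (F : D ⥤ C) [HasFiniteCoproducts C] : Funnelize ds ⥤ C where
  obj a := match a with
    | some d => F.obj d
    | none => ∐ (fun i => F.obj (ds i))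
  map {a b} f := match a, b, f with
    | some _, some _, f => F.map f
    | some _, none, ⟨i, h⟩ => F.map h ≫ Sigma.ι (fun i => F.obj (ds i)) i
    | none, none, _ => 𝟙 _
    | none, some _, f => f.elim
  map_id a := match a with
    | some d => F.map_id d
    | none => rfl
  map_comp {a b c} f g := match a, b, c, f, g with
    | some _, some _, some _, f, g => F.map_comp f g
    | some _, some _, none, f, ⟨i, h⟩ => by
        show F.map (f ≫ h) ≫ _ = F.map f ≫ F.map h ≫ _
        rw [F.map_comp, Category.assoc]
    | some _, none, none, ⟨i, h⟩, _ => (Category.comp_id _).symm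
    | none, none, none, _, _ => (Category.comp_id _).symm
    | none, some _, _, f, _ => f.elim
    | some _, none, some _, _, g => g.elim
    | none, none, some _, _, g => g.elim

theorem stmt5 (C : Type u) [Category.{v} C] :
    (∀ (D : Type) [SmallCategory D] (F : D ⥤ C),
        (∃ (n : ℕ) (ds : Fin n → D), ∀ d : D, ∃ i, Nonempty (d ⟶ ds i)) →
        HasColimit F) ↔
      (HasFiniteCoproducts C ∧
        ∀ (D : Type) [SmallCategory D] (d₀ : D) (F : D ⥤ C),
          (∀ d : D, Nonempty (d ⟶ d₀)) → HasColimit F) := by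
  constructor
  · intro h
    constructor
    · refine ⟨fun n => ⟨fun F => ?_⟩⟩
      exact h _ F ⟨n, fun i => ⟨i⟩, fun d => ⟨d.as, ⟨Discrete.eqToHom rfl⟩⟩⟩
    · intro D _ d₀ F hd
      exact h D F ⟨1, fun _ => d₀, fun d => ⟨0, hd d⟩⟩
  · rintro ⟨hfc, hfun⟩ D _ F ⟨n, ds, hds⟩
    let F' := funnelizeExt ds F
    have : HasColimit F' := by
      apply hfun (Funnelize ds) (Funnelize.top ds)
      intro d
      match d with
      | none => exact ⟨(PUnit.unit : Funnelize.top ds ⟶ Funnelize.top ds)⟩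
      | some d =>
        obtain ⟨i, ⟨f⟩⟩ := hds d
        exact ⟨Funnelize.toTop ds i f⟩
    refine HasColimit.mk ⟨⟨colimit F', ⟨fun d => colimit.ι F' (Funnelize.of ds d), ?_⟩⟩, ?_⟩
    · intro d d' f
      show F.map f ≫ colimit.ι F' (Funnelize.of ds d') =
        colimit.ι F' (Funnelize.of ds d) ≫ ((Functor.const D).obj (colimit F')).map f
      rw [Functor.const_obj_map, Category.comp_id]
      exact colimit.w F' (Funnelize.homOf ds f)
    · refine
        { desc := fun s => colimit.desc F'
            ⟨s.pt, ⟨fun a => match a with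
              | some d => s.ι.app d
              | none => Sigma.desc (fun i => s.ι.app (ds i)), ?_⟩⟩
          fac := ?_
          uniq := ?_ }
      · intro a b f
        match a, b, f with
        | some d, some d', f =>
          show F.map f ≫ s.ι.app d' = s.ι.app d ≫ 𝟙 _
          simpa using s.w f
        | some d, none, ⟨i, f⟩ =>
          show (F.map f ≫ Sigma.ι (fun i => F.obj (ds i)) i) ≫
              Sigma.desc (fun i => s.ι.app (ds i)) = s.ι.app d ≫ 𝟙 _
          rw [Category.assoc, Sigma.ι_desc, Category.comp_id]
          exact s.w f
        | none, none, _ =>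
          show 𝟙 _ ≫ _ = _ ≫ 𝟙 _
          rw [Category.id_comp, Category.comp_id]
      · intro s d
        exact colimit.ι_desc _ (Funnelize.of ds d)
      · intro s m hm
        apply colimit.hom_ext
        intro a
        match a with
        | some d =>
          erw [colimit.ι_desc]
          exact hm d
        | none =>
          have key : ∀ i : Fin n, Sigma.ι (fun i => F.obj (ds i)) i ≫ colimit.ι F' none =
              colimit.ι F' (some (ds i)) := by
            intro i
            have h2 := colimit.w F' (Funnelize.toTop ds i (𝟙 (ds i)))
            rw [show F'.map (Funnelize.toTop ds i (𝟙 (ds i))) =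
              F.map (𝟙 (ds i)) ≫ Sigma.ι (fun i => F.obj (ds i)) i from rfl,
              F.map_id, Category.id_comp] at h2
            exact h2
          apply Sigma.hom_ext
          intro i
          erw [← Category.assoc, ← Category.assoc, key i, colimit.ι_desc]
          exact hm (ds i)
end

section
/- Let (C,J) be a small site and E = Sh(C,J). The colimit in E of any funneling diagram all of whose values are supercompact objects is again supercompact, and the colimit in E of any multifunneling diagram all of whose values are compact objects is again compact. -/
open CategoryTheory CategoryTheory.Limits

universe w v u

/-- A family of morphisms into `X` is jointly epimorphic. -/
def JointlyEpic {C : Type u} [Category.{v} C] {I : Type w} {A : I → C} {X : C}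
    (f : ∀ i, A i ⟶ X) : Prop :=
  ∀ ⦃Y : C⦄ (g h : X ⟶ Y), (∀ i, f i ≫ g = f i ≫ h) → g = h

/-- An object is supercompact if every jointly epimorphic family of morphisms into it
contains an epimorphism. -/
def IsSupercompact {C : Type u} [Category.{v} C] (X : C) : Prop :=
  ∀ {I : Type} (A : I → C) (f : ∀ i, A i ⟶ X), JointlyEpic f → ∃ i, Epi (f i)

/-- An object is compact if every jointly epimorphic family of morphisms into it
contains a finite jointly epimorphic subfamily. -/
def IsCompactObj {C : Type u} [Category.{v} C] (X : C) : Prop :=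
  ∀ {I : Type} (A : I → C) (f : ∀ i, A i ⟶ X), JointlyEpic f →
    ∃ s : Finset I, JointlyEpic (fun i : {j // j ∈ s} => f i.1)

namespace Stmt6Aux

open Opposite

variable {C : Type} [SmallCategory C] {J : GrothendieckTopology C}

/-- The sieve of morphisms along which a section `x` lifts through some member of the
family `f`. -/
def famSieve {I : Type} {A : I → Sheaf J Type} {X : Sheaf J Type}
    (f : ∀ i, A i ⟶ X) {c : C} (x : X.val.obj (op c)) : Sieve c where
  arrows c' h := ∃ (i : I) (a : (A i).val.obj (op c')),
    (f i).hom.app (op c') a = X.val.map h.op x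
  downward_closed := by
    rintro c' c'' h ⟨i, a, ha⟩ k
    refine ⟨i, (A i).val.map k.op a, ?_⟩
    rw [FunctorToTypes.naturality, ha, op_comp, FunctorToTypes.map_comp_apply]

/-- A jointly epimorphic family of morphisms of sheaves is "locally jointly surjective". -/
theorem famSieve_mem_of_jointlyEpic {I : Type} {A : I → Sheaf J Type} {X : Sheaf J Type}
    (f : ∀ i, A i ⟶ X) (hf : JointlyEpic f) {c : C} (x : X.val.obj (op c)) :
    famSieve f x ∈ J c := by
  -- the union of the images of the `f i`, as a subpresheaf of `X`
  let G₀ : Subfunctor X.val :=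
    { obj := fun U => {y | ∃ (i : I) (a : (A i).val.obj U), (f i).hom.app U a = y}
      map := by
        rintro U V h y ⟨i, a, ha⟩
        exact ⟨i, (A i).val.map h a, by rw [FunctorToTypes.naturality, ha]⟩ }
  let G : Subfunctor X.val := G₀.sheafify J
  have hXtype : Presieve.IsSheaf J X.val := (isSheaf_iff_isSheaf_of_type J _).1 X.cond
  have hGsheaf : Presieve.IsSheaf J G.toFunctor := G₀.sheafify_isSheaf hXtype
  let GS : Sheaf J Type := ⟨G.toFunctor, (isSheaf_iff_isSheaf_of_type J _).2 hGsheaf⟩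
  let ι : GS ⟶ X := ⟨G.ι⟩
  -- each `f i` factors through `GS`
  have hmem : ∀ (i : I) (U : Cᵒᵖ) (a : (A i).val.obj U), (f i).hom.app U a ∈ G.obj U :=
    fun i U a => (G₀.le_sheafify J) U ⟨i, a, rfl⟩
  let lift : ∀ i, A i ⟶ GS := fun i => ⟨Subfunctor.lift (f i).hom (by rintro U _ ⟨a, rfl⟩; exact hmem i U a)⟩
  have hfac : ∀ i, lift i ≫ ι = f i := fun i =>
    Sheaf.hom_ext (Subfunctor.lift_ι _ (by rintro U _ ⟨a, rfl⟩; exact hmem i U a))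
  -- so `ι` is an epimorphism, hence locally surjective
  have hepi : Epi ι := by
    constructor
    intro Z g h w
    refine hf g h fun i => ?_
    rw [← hfac i, Category.assoc, w, Category.assoc]
  have hls : Sheaf.IsLocallySurjective ι := by
    rw [Sheaf.isLocallySurjective_iff_epi]
    exact hepi
  -- transitivity: `x` locally lies in `G`, and sections of `G` locally lift through the family
  have hT : Presheaf.imageSieve ι.hom x ∈ J c := Presheaf.imageSieve_mem J ι.hom x
  refine J.transitive hT _ ?_
  rintro c' h ⟨t, ht⟩
  -- `t : G.obj (op c')` with `t.1 = X.val.map h.op x`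
  let t' : G.toFunctor.obj (op c') := t
  have ht' : t'.1 = X.val.map h.op x := ht
  have htmem : X.val.map h.op x ∈ G.obj (op c') := ht' ▸ t'.2
  refine J.superset_covering ?_ htmem
  rintro c'' k ⟨i, a, ha⟩
  exact ⟨i, a, by rw [ha, op_comp, FunctorToTypes.map_comp_apply]⟩

/-- A "locally jointly surjective" family of morphisms of sheaves is jointly epimorphic. -/
theorem jointlyEpic_of_famSieve_mem {I : Type} {A : I → Sheaf J Type} {X : Sheaf J Type}
    (f : ∀ i, A i ⟶ X) (hf : ∀ (c : C) (x : X.val.obj (op c)), famSieve f x ∈ J c) :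
    JointlyEpic f := by
  intro Y g h w
  refine Sheaf.hom_ext (NatTrans.ext (funext fun U => ConcreteCategory.hom_ext _ _ fun x => ?_))
  refine (Presieve.IsSheaf.isSeparated
    ((isSheaf_iff_isSheaf_of_type J _).1 Y.cond) _ (hf U.unop x)).ext ?_
  rintro c' k ⟨i, a, ha⟩
  have hg := ConcreteCategory.congr_hom (g.hom.naturality k.op) x
  have hh := ConcreteCategory.congr_hom (h.hom.naturality k.op) x
  dsimp at hg hh ⊢
  rw [← hg, ← hh, ← ha]
  exact ConcreteCategory.congr_hom (congr_app (congrArg (fun q => q.hom) (w i)) (op c')) a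

section Pullback

variable {A E X : Sheaf J Type} (φ : A ⟶ X) (ε : E ⟶ X)

/-- An explicit pullback presheaf of `φ` and `ε`. -/
@[simps]
def pbPresheaf : Cᵒᵖ ⥤ Type where
  obj U := {p : A.val.obj U × E.val.obj U // φ.hom.app U p.1 = ε.hom.app U p.2}
  map h := ↾fun p => ⟨(A.val.map h p.1.1, E.val.map h p.1.2), by
    rw [FunctorToTypes.naturality, FunctorToTypes.naturality, p.2]⟩
  map_id U := by
    ext p
    · exact FunctorToTypes.map_id_apply A.val _
    · exact FunctorToTypes.map_id_apply E.val _
  map_comp h k := by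
    ext p
    · exact FunctorToTypes.map_comp_apply A.val h k _
    · exact FunctorToTypes.map_comp_apply E.val h k _

theorem pbPresheaf_isSheaf : Presieve.IsSheaf J (pbPresheaf φ ε) := by
  have hA : Presieve.IsSheaf J A.val := (isSheaf_iff_isSheaf_of_type J _).1 A.cond
  have hE : Presieve.IsSheaf J E.val := (isSheaf_iff_isSheaf_of_type J _).1 E.cond
  have hX : Presieve.IsSheaf J X.val := (isSheaf_iff_isSheaf_of_type J _).1 X.cond
  intro c S hS x hx
  let xa : Presieve.FamilyOfElements A.val S.arrows := fun Y g hg => (x g hg).1.1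
  let xb : Presieve.FamilyOfElements E.val S.arrows := fun Y g hg => (x g hg).1.2
  have hxa : xa.Compatible := by
    intro Y₁ Y₂ Z g₁ g₂ f₁ f₂ h₁ h₂ hcomm
    exact congrArg (fun p => p.1.1) (hx g₁ g₂ h₁ h₂ hcomm)
  have hxb : xb.Compatible := by
    intro Y₁ Y₂ Z g₁ g₂ f₁ f₂ h₁ h₂ hcomm
    exact congrArg (fun p => p.1.2) (hx g₁ g₂ h₁ h₂ hcomm)
  obtain ⟨a, ha, ha'⟩ := hA S hS xa hxa
  obtain ⟨b, hb, hb'⟩ := hE S hS xb hxb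
  have key : φ.hom.app (op c) a = ε.hom.app (op c) b := by
    refine ((hX S hS).isSeparatedFor).ext ?_
    intro Y g hg
    have h1 := ConcreteCategory.congr_hom (φ.hom.naturality g.op) a
    have h2 := ConcreteCategory.congr_hom (ε.hom.naturality g.op) b
    dsimp at h1 h2
    rw [← h1, ← h2, ha g hg, hb g hg]
    exact (x g hg).2
  refine ⟨⟨(a, b), key⟩, ?_, ?_⟩
  · intro Y g hg
    exact Subtype.ext (Prod.ext (ha g hg) (hb g hg))
  · rintro ⟨⟨a', b'⟩, hab'⟩ ht
    refine Subtype.ext (Prod.ext ?_ ?_)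
    · exact ha' a' fun Y g hg => congrArg (fun p => p.1.1) (ht g hg)
    · exact hb' b' fun Y g hg => congrArg (fun p => p.1.2) (ht g hg)

/-- An explicit pullback of `φ` and `ε` in the category of sheaves. -/
def pbSheaf : Sheaf J Type :=
  ⟨pbPresheaf φ ε, (isSheaf_iff_isSheaf_of_type J _).2 (pbPresheaf_isSheaf φ ε)⟩

/-- First projection from the pullback sheaf. -/
def pbFst : pbSheaf φ ε ⟶ A :=
  ⟨{ app := fun U => ↾fun p => p.1.1, naturality := fun U V h => rfl }⟩

/-- Second projection from the pullback sheaf. -/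
def pbSnd : pbSheaf φ ε ⟶ E :=
  ⟨{ app := fun U => ↾fun p => p.1.2, naturality := fun U V h => rfl }⟩

theorem pb_comm : pbFst φ ε ≫ φ = pbSnd φ ε ≫ ε := by
  refine Sheaf.hom_ext (NatTrans.ext (funext fun U => ConcreteCategory.hom_ext _ _ fun p => ?_))
  exact p.2

end Pullback

/-- Pulling a jointly epimorphic family back along any morphism yields a jointly
epimorphic family. -/
theorem jointlyEpic_pbSnd {I : Type} {A : I → Sheaf J Type} {X E : Sheaf J Type}
    (f : ∀ i, A i ⟶ X) (hf : JointlyEpic f) (e : E ⟶ X) :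
    JointlyEpic (fun i => pbSnd (f i) e) := by
  refine jointlyEpic_of_famSieve_mem _ fun c y => ?_
  have h0 : famSieve f (e.hom.app (op c) y) ∈ J c := famSieve_mem_of_jointlyEpic f hf _
  refine J.superset_covering ?_ h0
  rintro c' k ⟨i, a, ha⟩
  have hnat := ConcreteCategory.congr_hom (e.hom.naturality k.op) y
  dsimp at hnat
  refine ⟨i, ⟨(a, E.val.map k.op y), by rw [ha, hnat]⟩, rfl⟩

end Stmt6Aux

open Stmt6Aux Opposite

theorem stmt6 {C : Type} [SmallCategory C] (J : GrothendieckTopology C)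
    {D : Type} [SmallCategory D] (F : D ⥤ Sheaf J (Type)) (c : Limits.Cocone F)
    (hc : IsColimit c) :
    ((∃ d₀ : D, ∀ d : D, Nonempty (d ⟶ d₀)) → (∀ d, IsSupercompact (F.obj d)) →
      IsSupercompact c.pt) ∧
    ((∃ (n : ℕ) (ds : Fin n → D), ∀ d : D, ∃ i, Nonempty (d ⟶ ds i)) →
      (∀ d, IsCompactObj (F.obj d)) → IsCompactObj c.pt) := by
  constructor
  · rintro ⟨d₀, hd⟩ hsc I A f hf
    set e := c.ι.app d₀ with he_def
    -- the family of pullbacks of `f` along `e` is jointly epic into `F.obj d₀`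
    have hu : JointlyEpic (fun i => pbSnd (f i) e) := jointlyEpic_pbSnd f hf e
    obtain ⟨i, hi⟩ := hsc d₀ _ _ hu
    -- `e` is an epimorphism
    have he : Epi e := by
      constructor
      intro Z g h w
      refine hc.hom_ext fun d => ?_
      obtain ⟨k⟩ := hd d
      have : c.ι.app d = F.map k ≫ e := (c.w k).symm
      rw [this, Category.assoc, Category.assoc, w]
    refine ⟨i, ?_⟩
    have : Epi (pbSnd (f i) e ≫ e) := epi_comp _ _
    rw [← pb_comm (f i) e] at this
    exact epi_of_epi (pbFst (f i) e) (f i)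
  · rintro ⟨n, ds, hd⟩ hcp I A f hf
    classical
    -- for each `j`, pull `f` back along the leg at `ds j` and apply compactness
    have hu : ∀ j : Fin n, JointlyEpic (fun i => pbSnd (f i) (c.ι.app (ds j))) :=
      fun j => jointlyEpic_pbSnd f hf _
    choose s hs using fun j : Fin n => hcp (ds j) _ _ (hu j)
    refine ⟨Finset.univ.biUnion s, ?_⟩
    intro Y g h w
    have key : ∀ j : Fin n, c.ι.app (ds j) ≫ g = c.ι.app (ds j) ≫ h := by
      intro j
      refine hs j (c.ι.app (ds j) ≫ g) (c.ι.app (ds j) ≫ h) ?_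
      rintro ⟨i, hi⟩
      have hmem : i ∈ Finset.univ.biUnion s :=
        Finset.mem_biUnion.2 ⟨j, Finset.mem_univ j, hi⟩
      have hw := w ⟨i, hmem⟩
      have hcomm := pb_comm (f i) (c.ι.app (ds j))
      calc pbSnd (f i) (c.ι.app (ds j)) ≫ c.ι.app (ds j) ≫ g
          = pbFst (f i) (c.ι.app (ds j)) ≫ f i ≫ g := by
            rw [← Category.assoc, ← hcomm, Category.assoc]
        _ = pbFst (f i) (c.ι.app (ds j)) ≫ f i ≫ h := by rw [hw]
        _ = pbSnd (f i) (c.ι.app (ds j)) ≫ c.ι.app (ds j) ≫ h := by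
            rw [← Category.assoc, hcomm, Category.assoc]
    refine hc.hom_ext fun d => ?_
    obtain ⟨j, ⟨k⟩⟩ := hd d
    have : c.ι.app d = F.map k ≫ c.ι.app (ds j) := (c.w k).symm
    rw [this, Category.assoc, Category.assoc, key j]
end

section
/- Let (C,J) be a small site such that the supercompact objects of E = Sh(C,J) form a separating family, and let C_s denote the full subcategory of E on the supercompact objects. Then a morphism of C_s is an epimorphism in E if and only if it is a strict epimorphism in C_s. -/
open CategoryTheory CategoryTheory.Limits

universe w v u

/-- `h` is a strict epimorphism in the full subcategory of objects satisfying `P`: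
every morphism `k` (with codomain in the subcategory) coequalizing all parallel pairs
(with domain in the subcategory) coequalized by `h` factors uniquely through `h`. -/
def IsStrictEpiIn {C : Type u} [Category.{v} C] (P : C → Prop) {D X : C}
    (h : D ⟶ X) : Prop :=
  ∀ ⦃E : C⦄, P E → ∀ (k : D ⟶ E),
    (∀ ⦃B : C⦄, P B → ∀ (p q : B ⟶ D), p ≫ h = q ≫ h → p ≫ k = q ≫ k) →
    ∃! m : X ⟶ E, h ≫ m = k

namespace Stmt7Aux

open Opposite GrothendieckTopology

variable {C : Type} [SmallCategory C] (J : GrothendieckTopology C)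

/-- The sheaf morphism from the sheafified representable corresponding to a section. -/
noncomputable def secHom {F : Sheaf J Type} {c : C} (x : F.val.obj (op c)) :
    (presheafToSheaf J Type).obj (yoneda.obj c) ⟶ F :=
  ((sheafificationAdjunction J Type).homEquiv (yoneda.obj c) F).symm
    (CategoryTheory.yonedaEquiv.symm x)

lemma secHom_comp {F G : Sheaf J Type} {c : C} (x : F.val.obj (op c)) (α : F ⟶ G) :
    secHom J x ≫ α = secHom J (α.hom.app (op c) x) := by
  dsimp only [secHom]
  rw [← CategoryTheory.yonedaEquiv_symm_naturality_right]
  exact ((sheafificationAdjunction J Type).homEquiv_naturality_right_symm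
    (CategoryTheory.yonedaEquiv.symm x) α).symm

/-- The universal element. -/
noncomputable def ue (c : C) : ((presheafToSheaf J Type).obj (yoneda.obj c)).val.obj (op c) :=
  (CategoryTheory.toSheafify J (yoneda.obj c)).app (op c) (𝟙 c)

lemma secHom_app {F : Sheaf J Type} {c : C} (x : F.val.obj (op c)) :
    (secHom J x).hom.app (op c) (ue J c) = x := by
  have h : CategoryTheory.toSheafify J (yoneda.obj c) ≫ (secHom J x).hom
      = CategoryTheory.yonedaEquiv.symm x := by
    have h1 := (sheafificationAdjunction J Type).homEquiv_unit (X := yoneda.obj c) (Y := F)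
      (f := secHom J x)
    have h2 : (sheafificationAdjunction J Type).homEquiv (yoneda.obj c) F (secHom J x)
        = CategoryTheory.yonedaEquiv.symm x := Equiv.apply_symm_apply _ _
    rw [h1] at h2
    simpa using h2
  have := types_congr_hom (congrArg (fun t => NatTrans.app t (op c)) h) (𝟙 c)
  simpa [ue] using this

/-- The sieve of arrows along which a section is in the image of the family. -/
def famSieve {I : Type} {A : I → Sheaf J Type} {X : Sheaf J Type} (f : ∀ i, A i ⟶ X)
    {c : C} (x : X.val.obj (op c)) : Sieve c where
  arrows c' φ := ∃ (i : I) (a : (A i).val.obj (op c')),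
    (f i).hom.app (op c') a = X.val.map φ.op x
  downward_closed := by
    rintro c' c'' φ ⟨i, a, ha⟩ ψ
    refine ⟨i, (A i).val.map ψ.op a, ?_⟩
    rw [FunctorToTypes.naturality, ha, ← FunctorToTypes.map_comp_apply, ← op_comp]

/-- Local joint surjectivity of a family of morphisms of sheaves. -/
def LJS {I : Type} {A : I → Sheaf J Type} {X : Sheaf J Type} (f : ∀ i, A i ⟶ X) : Prop :=
  ∀ (c : C) (x : X.val.obj (op c)), famSieve J f x ∈ J c

lemma jointlyEpic_of_LJS {I : Type} {A : I → Sheaf J Type} {X : Sheaf J Type}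
    {f : ∀ i, A i ⟶ X} (hf : LJS J f) : JointlyEpic f := by
  intro Y g h hgh
  apply Sheaf.hom_ext
  apply NatTrans.ext
  funext c; apply ConcreteCategory.hom_ext; intro x
  apply (Presieve.IsSheaf.isSeparated
    ((isSheaf_iff_isSheaf_of_type J Y.val).1 Y.cond) _ (hf c.unop x)).ext
  rintro c' φ ⟨i, a, ha⟩
  have h1 : ∀ (u : X ⟶ Y), Y.val.map φ.op (u.hom.app c x)
      = u.hom.app (op c') ((f i).hom.app (op c') a) := by
    intro u
    rw [ha, FunctorToTypes.naturality]
  rw [h1 g, h1 h]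
  have h2 : ((f i) ≫ g).hom.app (op c') a = ((f i) ≫ h).hom.app (op c') a := by rw [hgh i]
  simpa using h2

lemma LJS_of_jointlyEpic {I : Type} {A : I → Sheaf J Type} {X : Sheaf J Type}
    {f : ∀ i, A i ⟶ X} (hf : JointlyEpic f) : LJS J f := by
  classical
  let G₀ : Subfunctor X.val :=
    { obj := fun c => {x | ∃ (i : I) (a : (A i).val.obj c), (f i).hom.app c a = x}
      map := by
        rintro U V φ x ⟨i, a, rfl⟩
        exact ⟨i, (A i).val.map φ a, NatTrans.naturality_apply (f i).hom φ a⟩ }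
  let Ash : Sheaf J Type := ⟨(G₀.sheafify J).toFunctor,
    (isSheaf_iff_isSheaf_of_type _ _).2
      (G₀.sheafify_isSheaf ((isSheaf_iff_isSheaf_of_type _ _).1 X.cond))⟩
  let ι : Ash ⟶ X := ⟨(G₀.sheafify J).ι⟩
  have hfac : ∀ i, ∃ ℓ : A i ⟶ Ash, ℓ ≫ ι = f i := by
    intro i
    refine ⟨⟨(G₀.sheafify J).lift (f i).hom (by rintro U _ ⟨a, rfl⟩; exact G₀.le_sheafify J U ⟨i, a, rfl⟩)⟩, ?_⟩
    exact Sheaf.hom_ext rfl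
  have hinlinr : pushout.inl ι ι = pushout.inr ι ι := by
    apply hf
    intro i
    obtain ⟨ℓ, hℓ⟩ := hfac i
    rw [← hℓ, Category.assoc, Category.assoc, pushout.condition]
  have hι : Epi ι := by
    constructor
    intro Z u v huv
    calc u = pushout.inl ι ι ≫ pushout.desc u v huv := (pushout.inl_desc u v huv).symm
      _ = pushout.inr ι ι ≫ pushout.desc u v huv := by rw [hinlinr]
      _ = v := pushout.inr_desc u v huv
  have hls : Sheaf.IsLocallySurjective ι := (Sheaf.isLocallySurjective_iff_epi' _ ι).mpr hι
  intro c x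
  refine J.transitive (Presheaf.imageSieve_mem J ι.hom x) _ ?_
  rintro c' φ ⟨t, ht⟩
  have htmem : G₀.sieveOfSection t.1 ∈ J c' := t.2
  have ht' : t.1 = X.val.map φ.op x := ht
  rw [ht'] at htmem
  refine J.superset_covering ?_ htmem
  rintro c'' ψ hψ
  obtain ⟨i, a, ha⟩ := hψ
  exact ⟨i, a, by rw [ha, ← FunctorToTypes.map_comp_apply, ← op_comp]⟩

/-- A quotient of a supercompact sheaf is supercompact. -/
lemma isSupercompact_of_epi {D A : Sheaf J Type} (hD : IsSupercompact D) (e : D ⟶ A)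
    [he : Epi e] : IsSupercompact A := by
  intro I T g hg
  have hLJS : LJS J g := LJS_of_jointlyEpic J hg
  let K := Σ (c : C) (j : I),
    { p : (T j).val.obj (op c) × D.val.obj (op c) //
        (g j).hom.app (op c) p.1 = e.hom.app (op c) p.2 }
  have hK : JointlyEpic (fun k : K => secHom J k.2.2.1.2) := by
    apply jointlyEpic_of_LJS
    intro c d
    refine J.superset_covering ?_ (hLJS c (e.hom.app (op c) d))
    rintro c' φ ⟨j, t, ht⟩
    have ht' : (g j).hom.app (op c') t = e.hom.app (op c') (D.val.map φ.op d) := by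
      rw [ht, FunctorToTypes.naturality]
    exact ⟨⟨c', j, ⟨(t, D.val.map φ.op d), ht'⟩⟩, ue J c', secHom_app J _⟩
  obtain ⟨k, hk⟩ := hD _ _ hK
  obtain ⟨c, j, ⟨⟨t, d⟩, hp⟩⟩ := k
  have h1 : secHom J t ≫ g j = secHom J d ≫ e := by
    rw [secHom_comp, secHom_comp, hp]
  have h2 : Epi (secHom J d ≫ e) := by
    have : Epi (secHom J d) := hk
    exact epi_comp _ _
  rw [← h1] at h2
  exact ⟨j, epi_of_epi (secHom J t) (g j)⟩

end Stmt7Aux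

open Stmt7Aux Opposite

theorem stmt7 {C : Type} [SmallCategory C] (J : GrothendieckTopology C)
    (hsep : ∀ ⦃X Y : Sheaf J (Type)⦄ (g h : X ⟶ Y),
      (∀ (S : Sheaf J (Type)), IsSupercompact S → ∀ (u : S ⟶ X), u ≫ g = u ≫ h) →
        g = h)
    {D X : Sheaf J (Type)} (hD : IsSupercompact D) (hX : IsSupercompact X)
    (f : D ⟶ X) :
    Epi f ↔ IsStrictEpiIn IsSupercompact f := by
  constructor
  · -- Epi → strict epi
    intro hf G hG k cond
    -- (†) : k identifies sections identified by f
    have dagger : ∀ (c : C) (d d' : D.val.obj (op c)),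
        f.hom.app (op c) d = f.hom.app (op c) d' →
          k.hom.app (op c) d = k.hom.app (op c) d' := by
      intro c d d' hdd'
      have h1 : secHom J d ≫ k = secHom J d' ≫ k := by
        apply hsep
        intro S hS u
        rw [← Category.assoc, ← Category.assoc]
        apply cond hS (u ≫ secHom J d) (u ≫ secHom J d')
        rw [Category.assoc, Category.assoc, secHom_comp, secHom_comp, hdd']
      have h2 : (secHom J d ≫ k).hom = (secHom J d' ≫ k).hom := by rw [h1]
      have h3 := types_congr_hom (congrArg (fun t => NatTrans.app t (op c)) h2) (ue J c)
      simpa [secHom_app] using h3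
    haveI : Sheaf.IsLocallySurjective f := (Sheaf.isLocallySurjective_iff_epi' _ f).mpr hf
    have hGs : Presieve.IsSheaf J G.val := (isSheaf_iff_isSheaf_of_type J G.val).1 G.cond
    have app_pre : ∀ {c : Cᵒᵖ} (x : X.val.obj c) {c' : C} (φ : c' ⟶ c.unop)
        (hφ : Presheaf.imageSieve f.hom x φ),
        f.hom.app (op c') (Presheaf.localPreimage f.hom x φ hφ) = X.val.map φ.op x := by
      intro c x c' φ hφ
      exact hφ.choose_spec
    -- the family of elements to glue
    let fam : ∀ (c : Cᵒᵖ) (x : X.val.obj c),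
        Presieve.FamilyOfElements G.val (Presheaf.imageSieve f.hom x).arrows :=
      fun c x c' φ hφ => k.hom.app (op c') (Presheaf.localPreimage f.hom x φ hφ)
    have hcomp : ∀ (c : Cᵒᵖ) (x : X.val.obj c), (fam c x).Compatible := by
      intro c x Y₁ Y₂ Z g₁ g₂ f₁ f₂ h₁ h₂ hcomm
      show G.val.map g₁.op (k.hom.app _ _) = G.val.map g₂.op (k.hom.app _ _)
      rw [← FunctorToTypes.naturality, ← FunctorToTypes.naturality]
      apply dagger
      rw [FunctorToTypes.naturality, FunctorToTypes.naturality, app_pre, app_pre,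
        ← FunctorToTypes.map_comp_apply, ← FunctorToTypes.map_comp_apply,
        ← op_comp, ← op_comp, hcomm]
    let mapp : ∀ (c : Cᵒᵖ) (x : X.val.obj c), G.val.obj c := fun c x =>
      (hGs _ (Presheaf.imageSieve_mem J f.hom x)).amalgamate (fam c x) (hcomp c x)
    have hglue : ∀ (c : Cᵒᵖ) (x : X.val.obj c) {c' : C} (φ : c' ⟶ c.unop)
        (hφ : Presheaf.imageSieve f.hom x φ),
        G.val.map φ.op (mapp c x) = fam c x φ hφ :=
      fun c x c' φ hφ =>
        (hGs _ (Presheaf.imageSieve_mem J f.hom x)).valid_glue (hcomp c x) φ hφ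
    have hnat : ∀ {c c'' : Cᵒᵖ} (α : c ⟶ c'') (x : X.val.obj c),
        mapp c'' (X.val.map α x) = G.val.map α (mapp c x) := by
      intro c c'' α x
      apply ((hGs _ (Presheaf.imageSieve_mem J f.hom (X.val.map α x))).isSeparatedFor).ext
      intro c''' φ hφ
      rw [hglue c'' (X.val.map α x) φ hφ, ← FunctorToTypes.map_comp_apply]
      have heq : α ≫ φ.op = (φ ≫ α.unop).op := rfl
      have hmem : Presheaf.imageSieve f.hom x (φ ≫ α.unop) := by
        obtain ⟨s, hs⟩ := hφ
        refine ⟨s, ?_⟩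
        rw [hs]
        have hcc := types_congr_hom (X.val.map_comp α φ.op) x
        rw [heq] at hcc
        exact hcc.symm
      rw [heq, hglue c x (φ ≫ α.unop) hmem]
      apply dagger
      rw [app_pre, app_pre]
      have hcc := types_congr_hom (X.val.map_comp α φ.op) x
      rw [heq] at hcc
      exact hcc.symm
    let mval : X.val ⟶ G.val := { app := fun c => ↾(mapp c), naturality := fun c c'' α => ConcreteCategory.hom_ext _ _ fun x =>
      (hnat α x) }
    have hfac : ∀ (c : Cᵒᵖ) (d : D.val.obj c), mapp c (f.hom.app c d) = k.hom.app c d := by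
      intro c d
      apply ((hGs _ (Presheaf.imageSieve_mem J f.hom (f.hom.app c d))).isSeparatedFor).ext
      intro c' φ hφ
      rw [hglue c (f.hom.app c d) φ hφ]
      show k.hom.app _ _ = G.val.map φ.op (k.hom.app c d)
      rw [← FunctorToTypes.naturality]
      apply dagger
      rw [app_pre, FunctorToTypes.naturality]
    refine ⟨⟨mval⟩, ?_, ?_⟩
    · apply Sheaf.hom_ext
      apply NatTrans.ext
      funext c; apply ConcreteCategory.hom_ext; intro d
      exact hfac c d
    · intro y hy
      rw [← cancel_epi f, hy]
      apply Sheaf.hom_ext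
      apply NatTrans.ext
      funext c; apply ConcreteCategory.hom_ext; intro d
      exact (hfac c d).symm
  · -- strict epi → Epi
    intro hst
    let data := (Sheaf.locallySurjective J Type).factorizationData (Sheaf.locallyInjective J Type) f
    haveI h1 : Sheaf.IsLocallySurjective data.i := data.hi
    haveI h2 : Sheaf.IsLocallyInjective data.p := data.hp
    haveI : Epi data.i := Sheaf.epi_of_isLocallySurjective _
    haveI : Mono data.p := Sheaf.mono_of_isLocallyInjective _
    have hA : IsSupercompact data.Z := isSupercompact_of_epi J hD data.i
    obtain ⟨m, hm, -⟩ := hst hA data.i (fun B hB p q hpq => by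
      rw [← cancel_mono data.p, Category.assoc, Category.assoc, data.fac]
      exact hpq)
    obtain ⟨m', hm', hm'uniq⟩ := hst hX f (fun B hB p q hpq => hpq)
    have hmp : m ≫ data.p = 𝟙 X := by
      have e1 : f ≫ (m ≫ data.p) = f := by
        rw [← Category.assoc, hm, data.fac]
      rw [hm'uniq (m ≫ data.p) e1, hm'uniq (𝟙 X) (by simp)]
    have hpm : data.p ≫ m = 𝟙 data.Z := by
      rw [← cancel_epi data.i, ← Category.assoc, data.fac, hm, Category.comp_id]
    haveI : IsIso data.p := ⟨m, hpm, hmp⟩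
    rw [← data.fac]
    exact epi_comp _ _
end

section
/- Let (C,J) be a small site, E = Sh(C,J), and C_c the full subcategory of E on the compact objects. A family of morphisms of C_c with a common codomain is jointly epimorphic in C_c if and only if it is jointly epimorphic in E. -/
open CategoryTheory CategoryTheory.Limits

universe w v u

/-- A family of morphisms into `X` is jointly epimorphic in the full subcategory of
objects satisfying `P`. -/
def JointlyEpicIn {C : Type u} [Category.{v} C] (P : C → Prop) {I : Type w}
    {A : I → C} {X : C} (f : ∀ i, A i ⟶ X) : Prop :=
  ∀ ⦃Y : C⦄, P Y → ∀ (g h : X ⟶ Y), (∀ i, f i ≫ g = f i ≫ h) → g = h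

namespace Stmt8Aux

open Opposite CategoryTheory.GrothendieckTopology

variable {C : Type} [SmallCategory C] {J : GrothendieckTopology C}

/-- The sieve of maps along which `x` restricts into the image of the family `f`. -/
def famSieve {I : Type} {A : I → Sheaf J (Type)} {X : Sheaf J (Type)}
    (f : ∀ i, A i ⟶ X) {c : Cᵒᵖ} (x : X.val.obj c) : Sieve c.unop where
  arrows d g := ∃ (i : I) (y : (A i).val.obj (op d)), (f i).hom.app (op d) y = X.val.map g.op x
  downward_closed := by
    rintro d e g ⟨i, y, hy⟩ j
    refine ⟨i, (A i).val.map j.op y, ?_⟩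
    rw [FunctorToTypes.naturality, hy, ← FunctorToTypes.map_comp_apply, ← op_comp]

/-- A family of morphisms of sheaves is locally (jointly) surjective. -/
def LS {I : Type} {A : I → Sheaf J (Type)} {X : Sheaf J (Type)}
    (f : ∀ i, A i ⟶ X) : Prop :=
  ∀ (c : Cᵒᵖ) (x : X.val.obj c), famSieve f x ∈ J c.unop

lemma jointlyEpic_of_LS {I : Type} {A : I → Sheaf J (Type)} {X : Sheaf J (Type)}
    {f : ∀ i, A i ⟶ X} (hls : LS f) : JointlyEpic f := by
  intro Y g h hgh
  ext c x
  apply (Presieve.IsSheaf.isSeparated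
    ((isSheaf_iff_isSheaf_of_type _ _).1 Y.cond) _ (hls c x)).ext
  rintro d φ ⟨i, y, hy⟩
  change Y.val.map φ.op (g.hom.app c x) = Y.val.map φ.op (h.hom.app c x)
  rw [← FunctorToTypes.naturality, ← FunctorToTypes.naturality, ← hy]
  exact ConcreteCategory.congr_hom (congr_app (congr_arg InducedCategory.Hom.hom (hgh i)) (op d)) y

lemma LS_of_jointlyEpic {I : Type} {A : I → Sheaf J (Type)} {X : Sheaf J (Type)}
    {f : ∀ i, A i ⟶ X} (hf : JointlyEpic f) : LS f := by
  classical
  let G : Subfunctor X.val :=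
    { obj := fun c => {x | ∃ (i : I) (y : (A i).val.obj c), (f i).hom.app c y = x}
      map := by
        rintro c d φ x ⟨i, y, hy⟩
        exact ⟨i, (A i).val.map φ y, by rw [FunctorToTypes.naturality, hy]⟩ }
  let S : Sheaf J (Type) := ⟨(G.sheafify J).toFunctor, by
    rw [isSheaf_iff_isSheaf_of_type]
    exact Subfunctor.sheafify_isSheaf _ ((isSheaf_iff_isSheaf_of_type _ _).1 X.cond)⟩
  let m : S ⟶ X := ⟨(G.sheafify J).ι⟩
  have hfac : ∀ i, ∃ l : A i ⟶ S, l ≫ m = f i := fun i =>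
    ⟨⟨{ app := fun c => TypeCat.ofHom fun y => ⟨(f i).hom.app c y, G.le_sheafify J _ ⟨i, y, rfl⟩⟩
        naturality := fun c d φ => by
          ext y
          exact Subtype.ext (by exact (FunctorToTypes.naturality (f i).hom φ y : _)) }⟩, rfl⟩
  have hQ : pushout.inl m m = pushout.inr m m := by
    apply hf
    intro i
    obtain ⟨l, hl⟩ := hfac i
    rw [← hl, Category.assoc, Category.assoc, pushout.condition]
  have hepi : Epi m := by
    constructor
    intro Z g h w
    calc g = pushout.inl m m ≫ pushout.desc g h w := (pushout.inl_desc _ _ _).symm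
      _ = pushout.inr m m ≫ pushout.desc g h w := by rw [hQ]
      _ = h := pushout.inr_desc _ _ _
  haveI hlsm : Sheaf.IsLocallySurjective m :=
    (Sheaf.isLocallySurjective_iff_epi m).2 hepi
  intro c x
  apply J.transitive (Presheaf.imageSieve_mem J m.hom x) (famSieve f x)
  rintro d φ ⟨⟨tv, tp⟩, ht⟩
  have ht' : tv = X.val.map φ.op x := ht
  have h2 : G.sieveOfSection (X.val.map φ.op x) ∈ J d := by
    have h3 : G.sieveOfSection tv ∈ J d := tp
    rwa [ht'] at h3
  refine J.superset_covering ?_ h2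
  rintro e ψ ⟨i, y, hy⟩
  exact ⟨i, y, by rw [hy, ← FunctorToTypes.map_comp_apply, ← op_comp]⟩

section Pullback

variable {B W Z : Sheaf J (Type)} (u : B ⟶ Z) (e : W ⟶ Z)

/-- The concrete pullback presheaf of `u` and `e`. -/
def pbP : Cᵒᵖ ⥤ Type where
  obj c := { p : B.val.obj c × W.val.obj c // u.hom.app c p.1 = e.hom.app c p.2 }
  map {c d} φ := TypeCat.ofHom fun p => ⟨⟨B.val.map φ p.1.1, W.val.map φ p.1.2⟩, by
    rw [FunctorToTypes.naturality, FunctorToTypes.naturality, p.2]⟩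
  map_id c := by
    ext p
    exacts [FunctorToTypes.map_id_apply B.val p.1.1, FunctorToTypes.map_id_apply W.val p.1.2]
  map_comp φ ψ := by
    ext p
    exacts [FunctorToTypes.map_comp_apply B.val φ ψ p.1.1, FunctorToTypes.map_comp_apply W.val φ ψ p.1.2]

lemma pbP_isSheaf : Presheaf.IsSheaf J (pbP u e) := by
  rw [isSheaf_iff_isSheaf_of_type]
  intro c T hT x hx
  have hB := (isSheaf_iff_isSheaf_of_type _ _).1 B.cond T hT
  have hW := (isSheaf_iff_isSheaf_of_type _ _).1 W.cond T hT
  let x1 : Presieve.FamilyOfElements B.val T.arrows := fun d g hg => (x g hg).1.1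
  let x2 : Presieve.FamilyOfElements W.val T.arrows := fun d g hg => (x g hg).1.2
  have hx1 : x1.Compatible := fun Y1 Y2 Zc g1 g2 f1 f2 h1 h2 hcomm =>
    congr_arg (fun q => q.1.1) (hx g1 g2 h1 h2 hcomm)
  have hx2 : x2.Compatible := fun Y1 Y2 Zc g1 g2 f1 f2 h1 h2 hcomm =>
    congr_arg (fun q => q.1.2) (hx g1 g2 h1 h2 hcomm)
  obtain ⟨b, hb, hbu⟩ := hB x1 hx1
  obtain ⟨w, hw, hwu⟩ := hW x2 hx2
  have key : u.hom.app _ b = e.hom.app _ w := by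
    apply (Presieve.IsSheaf.isSeparated
      ((isSheaf_iff_isSheaf_of_type _ _).1 Z.cond) T hT).ext
    intro d g hg
    rw [← FunctorToTypes.naturality, ← FunctorToTypes.naturality, hb g hg, hw g hg]
    exact (x g hg).2
  refine ⟨⟨⟨b, w⟩, key⟩, ?_, ?_⟩
  · intro d g hg
    exact Subtype.ext (Prod.ext (hb g hg) (hw g hg))
  · rintro ⟨⟨b', w'⟩, key'⟩ ht'
    refine Subtype.ext (Prod.ext ?_ ?_)
    · exact hbu b' (fun d g hg => congr_arg (fun q => q.1.1) (ht' g hg))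
    · exact hwu w' (fun d g hg => congr_arg (fun q => q.1.2) (ht' g hg))

/-- The concrete pullback sheaf of `u` and `e`. -/
def Pb : Sheaf J (Type) := ⟨pbP u e, pbP_isSheaf u e⟩

/-- First projection of the pullback. -/
def pbFst : Pb u e ⟶ B := ⟨{ app := fun c => TypeCat.ofHom fun p => p.1.1, naturality := fun _ _ _ => rfl }⟩

/-- Second projection of the pullback. -/
def pbSnd : Pb u e ⟶ W := ⟨{ app := fun c => TypeCat.ofHom fun p => p.1.2, naturality := fun _ _ _ => rfl }⟩

lemma pb_comm : pbFst u e ≫ u = pbSnd u e ≫ e := by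
  ext c p
  exact p.2

end Pullback

lemma LS_pb {I : Type} {A : I → Sheaf J (Type)} {Z W : Sheaf J (Type)}
    (u : ∀ i, A i ⟶ Z) (e : W ⟶ Z) (h : LS u) :
    LS (fun i => pbSnd (u i) e) := by
  intro c x
  refine J.superset_covering ?_ (h c (e.hom.app c x))
  rintro d φ ⟨i, y, hy⟩
  refine ⟨i, ⟨⟨y, W.val.map φ.op x⟩, ?_⟩, rfl⟩
  rw [hy, ← FunctorToTypes.naturality]

lemma compact_of_pair {W Z : Sheaf J (Type)} (hW : IsCompactObj W) (e₁ e₂ : W ⟶ Z)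
    (hpair : ∀ ⦃Y : Sheaf J (Type)⦄ (g h : Z ⟶ Y),
      e₁ ≫ g = e₁ ≫ h → e₂ ≫ g = e₂ ≫ h → g = h) :
    IsCompactObj Z := by
  classical
  intro I B u hu
  have hls : LS u := LS_of_jointlyEpic hu
  obtain ⟨s₁, hs₁⟩ := hW _ (fun i => pbSnd (u i) e₁) (jointlyEpic_of_LS (LS_pb u e₁ hls))
  obtain ⟨s₂, hs₂⟩ := hW _ (fun i => pbSnd (u i) e₂) (jointlyEpic_of_LS (LS_pb u e₂ hls))
  refine ⟨s₁ ∪ s₂, ?_⟩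
  intro Y g h hgh
  refine hpair g h ?_ ?_
  · refine hs₁ (e₁ ≫ g) (e₁ ≫ h) ?_
    intro i
    have hi := hgh ⟨i.1, Finset.mem_union_left s₂ i.2⟩
    rw [← Category.assoc, ← pb_comm, Category.assoc, hi,
      ← Category.assoc, pb_comm, Category.assoc]
  · refine hs₂ (e₂ ≫ g) (e₂ ≫ h) ?_
    intro i
    have hi := hgh ⟨i.1, Finset.mem_union_right s₁ i.2⟩
    rw [← Category.assoc, ← pb_comm, Category.assoc, hi,
      ← Category.assoc, pb_comm, Category.assoc]

end Stmt8Aux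

theorem stmt8 {C : Type} [SmallCategory C] (J : GrothendieckTopology C)
    {I : Type} {A : I → Sheaf J (Type)} {X : Sheaf J (Type)}
    (hA : ∀ i, IsCompactObj (A i)) (hX : IsCompactObj X)
    (f : ∀ i, A i ⟶ X) :
    JointlyEpicIn IsCompactObj f ↔ JointlyEpic f := by
  constructor
  · intro hin Y g h hgh
    set m := equalizer.ι g h with hm
    have hfac : ∀ i, equalizer.lift (f i) (hgh i) ≫ m = f i := fun i => equalizer.lift_ι _ _
    have hQ : IsCompactObj (pushout m m) :=
      Stmt8Aux.compact_of_pair hX (pushout.inl m m) (pushout.inr m m)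
        (fun Y' g' h' h1 h2 => pushout.hom_ext h1 h2)
    have hio : pushout.inl m m = pushout.inr m m := by
      apply hin hQ
      intro i
      rw [← hfac i, Category.assoc, Category.assoc, pushout.condition]
    calc g = pushout.inl m m ≫ pushout.desc g h (equalizer.condition g h) :=
        (pushout.inl_desc _ _ _).symm
      _ = pushout.inr m m ≫ pushout.desc g h (equalizer.condition g h) := by rw [hio]
      _ = h := pushout.inr_desc _ _ _
  · intro hJE Y _ g h hgh
    exact hJE g h hgh
end

section
/- Let (C,J) be a small site, E = Sh(C,J), and C_c the full subcategory of E on the compact objects. Every morphism of C_c which is a monomorphism in E is a regular monomorphism in C_c (i.e. an equalizer of a pair of morphisms of C_c). -/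
open CategoryTheory CategoryTheory.Limits

universe w v u

open Opposite

namespace Stmt10Aux

variable {C : Type} [SmallCategory C] {J : GrothendieckTopology C}

lemma elem_comp {X Y Z : Sheaf J (Type)} (g : X ⟶ Y) (h : Y ⟶ Z) (c : Cᵒᵖ) (x : X.val.obj c) :
    (g ≫ h).hom.app c x = h.hom.app c (g.hom.app c x) := by
  simp

/-- The sieve of arrows along which `x` restricts into the (pointwise) image of the family `f`. -/
def covSieve {I : Type*} {A : I → Sheaf J (Type)} {X : Sheaf J (Type)}
    (f : ∀ i, A i ⟶ X) {c : Cᵒᵖ} (x : X.val.obj c) : Sieve c.unop where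
  arrows d φ := ∃ (i : I) (a : (A i).val.obj (op d)), (f i).hom.app (op d) a = X.val.map φ.op x
  downward_closed := by
    rintro d e φ ⟨i, a, ha⟩ ψ
    refine ⟨i, (A i).val.map ψ.op a, ?_⟩
    rw [elementwise_of% (f i).hom.naturality ψ.op, ha, ← FunctorToTypes.map_comp_apply]
    rfl

lemma covSieve_pullback {I : Type*} {A : I → Sheaf J (Type)} {X : Sheaf J (Type)}
    (f : ∀ i, A i ⟶ X) {c : Cᵒᵖ} (x : X.val.obj c) {d : C} (φ : d ⟶ c.unop) :
    (covSieve f x).pullback φ = covSieve f (X.val.map φ.op x) := by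
  ext e ψ
  show (∃ i a, _ = X.val.map (ψ ≫ φ).op x) ↔ (∃ i a, _ = X.val.map ψ.op (X.val.map φ.op x))
  rw [op_comp, FunctorToTypes.map_comp_apply]

/-- Local joint surjectivity of a family. -/
def LJS {I : Type*} {A : I → Sheaf J (Type)} {X : Sheaf J (Type)}
    (f : ∀ i, A i ⟶ X) : Prop :=
  ∀ (c : Cᵒᵖ) (x : X.val.obj c), covSieve f x ∈ J c.unop

/-- Separatedness of a sheaf. -/
lemma sep (X : Sheaf J (Type)) {c : Cᵒᵖ} {S : Sieve c.unop} (hS : S ∈ J c.unop)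
    {x y : X.val.obj c}
    (h : ∀ ⦃d : C⦄ (φ : d ⟶ c.unop), S φ → X.val.map φ.op x = X.val.map φ.op y) : x = y :=
  (((isSheaf_iff_isSheaf_of_type _ _).1 X.cond S hS).isSeparatedFor).ext
    (fun _ _ hφ => h _ hφ)

lemma ljs_jointlyEpic {I : Type} {A : I → Sheaf J (Type)} {X : Sheaf J (Type)}
    (f : ∀ i, A i ⟶ X) (h : LJS f) : JointlyEpic f := by
  intro Z g g' hgg'
  apply Sheaf.hom_ext
  ext c x
  refine sep Z (h c x) fun d φ hφ => ?_
  obtain ⟨i, a, ha⟩ := hφ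
  have h1 := elementwise_of% g.hom.naturality φ.op
  have h2 := elementwise_of% g'.hom.naturality φ.op
  show Z.val.map φ.op (g.hom.app c x) = Z.val.map φ.op (g'.hom.app c x)
  rw [← h1, ← h2, ← ha]
  have := congrArg (fun (t : A i ⟶ Z) => t.hom.app (op d) a) (hgg' i)
  simpa using this

end Stmt10Aux

namespace Stmt10Aux

variable {C : Type} [SmallCategory C] {J : GrothendieckTopology C}

lemma covSieve_id_mem {I : Type*} {A : I → Sheaf J (Type)} {X : Sheaf J (Type)}
    (f : ∀ i, A i ⟶ X) {c : Cᵒᵖ} (i : I) (a : (A i).val.obj c) :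
    covSieve f ((f i).hom.app c a) ∈ J c.unop := by
  refine J.covering_of_eq_top (Sieve.id_mem_iff_eq_top.1 ?_)
  exact ⟨i, a, by simp [op_id]⟩

lemma covSieve_map_id {I : Type*} {A : I → Sheaf J (Type)} {X : Sheaf J (Type)}
    (f : ∀ i, A i ⟶ X) {c : Cᵒᵖ} (x : X.val.obj c) :
    covSieve f (X.val.map (𝟙 c.unop).op x) = covSieve f x := by
  congr 1
  simp [op_id]

/-- The sieve of arrows along which `x` is *locally* in the image of the family. -/
def tSieve {I : Type*} {A : I → Sheaf J (Type)} {X : Sheaf J (Type)}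
    (f : ∀ i, A i ⟶ X) {c : Cᵒᵖ} (x : X.val.obj c) : Sieve c.unop where
  arrows d φ := covSieve f (X.val.map φ.op x) ∈ J d
  downward_closed := by
    intro d e φ hφ ψ
    rw [op_comp, FunctorToTypes.map_comp_apply, ← covSieve_pullback]
    exact J.pullback_stable ψ hφ

lemma tSieve_pullback {I : Type*} {A : I → Sheaf J (Type)} {X : Sheaf J (Type)}
    (f : ∀ i, A i ⟶ X) {c : Cᵒᵖ} (x : X.val.obj c) {d : C} (φ : d ⟶ c.unop) :
    (tSieve f x).pullback φ = tSieve f (X.val.map φ.op x) := by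
  ext e ψ
  show covSieve f (X.val.map (ψ ≫ φ).op x) ∈ J e ↔
    covSieve f (X.val.map ψ.op (X.val.map φ.op x)) ∈ J e
  rw [op_comp, FunctorToTypes.map_comp_apply]

lemma tSieve_closed {I : Type*} {A : I → Sheaf J (Type)} {X : Sheaf J (Type)}
    (f : ∀ i, A i ⟶ X) {c : Cᵒᵖ} (x : X.val.obj c) :
    J.IsClosed (tSieve f x) := by
  intro d φ hφ
  replace hφ : (tSieve f x).pullback φ ∈ J d := hφ
  rw [tSieve_pullback] at hφ
  show covSieve f (X.val.map φ.op x) ∈ J d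
  refine J.transitive hφ _ (fun e ψ hψ => ?_)
  rw [covSieve_pullback]
  exact hψ

lemma jointlyEpic_ljs {I : Type} {A : I → Sheaf J (Type)} {X : Sheaf J (Type)}
    (f : ∀ i, A i ⟶ X) (h : JointlyEpic f) : LJS f := by
  let Ω : Sheaf J (Type) :=
    ⟨(Functor.closedSieves J).toFunctor, (isSheaf_iff_isSheaf_of_type _ _).2 (classifier_isSheaf J)⟩
  let χ : X ⟶ Ω := ⟨{
    app := fun c => TypeCat.ofHom fun x => ⟨tSieve f x, tSieve_closed f x⟩
    naturality := by
      intro c c' φ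
      ext x
      exact Subtype.ext (tSieve_pullback f x φ.unop).symm }⟩
  let τ : X ⟶ Ω := ⟨{
    app := fun c => TypeCat.ofHom fun _ => ⟨(⊤ : Sieve c.unop), fun d g _ => trivial⟩
    naturality := by
      intro c c' φ
      ext x
      exact Subtype.ext (Sieve.pullback_top (f := φ.unop)).symm }⟩
  have hfi : ∀ i, f i ≫ χ = f i ≫ τ := by
    intro i
    apply Sheaf.hom_ext
    ext c a
    show χ.hom.app c ((f i).hom.app c a) = τ.hom.app c ((f i).hom.app c a)
    refine Subtype.ext ?_
    show tSieve f ((f i).hom.app c a) = ⊤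
    rw [← Sieve.id_mem_iff_eq_top]
    show covSieve f (X.val.map (𝟙 c.unop).op ((f i).hom.app c a)) ∈ J c.unop
    rw [covSieve_map_id]
    exact covSieve_id_mem f i a
  have hχτ := h χ τ hfi
  intro c x
  have h1 : χ.hom.app c x = τ.hom.app c x := by rw [hχτ]
  have ht : tSieve f x = ⊤ := congrArg Subtype.val h1
  have h2 : tSieve f x (𝟙 c.unop) := by rw [ht]; trivial
  have h3 : covSieve f (X.val.map (𝟙 c.unop).op x) ∈ J c.unop := h2
  rwa [covSieve_map_id] at h3

end Stmt10Aux

namespace Stmt10Aux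

variable {C : Type} [SmallCategory C] {J : GrothendieckTopology C}

section Pullback

variable {A X Y : Sheaf J (Type)}

/-- Explicit pointwise pullback presheaf of two sheaf morphisms. -/
def pbPre (α : A ⟶ Y) (β : X ⟶ Y) : Cᵒᵖ ⥤ Type where
  obj c := {p : A.val.obj c × X.val.obj c // α.hom.app c p.1 = β.hom.app c p.2}
  map {c c'} φ := TypeCat.ofHom fun p => ⟨⟨A.val.map φ p.1.1, X.val.map φ p.1.2⟩, by
    rw [elementwise_of% α.hom.naturality φ, elementwise_of% β.hom.naturality φ, p.2]⟩
  map_id c := by ext p <;> simp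
  map_comp φ ψ := by ext p <;> simp

lemma pbPre_isSheaf (α : A ⟶ Y) (β : X ⟶ Y) : Presheaf.IsSheaf J (pbPre α β) := by
  rw [isSheaf_iff_isSheaf_of_type]
  intro c S hS p hp
  have hA := (isSheaf_iff_isSheaf_of_type _ _).1 A.cond S hS
  have hX := (isSheaf_iff_isSheaf_of_type _ _).1 X.cond S hS
  let p1 : Presieve.FamilyOfElements A.val S.arrows := fun d φ hφ => (p φ hφ).1.1
  let p2 : Presieve.FamilyOfElements X.val S.arrows := fun d φ hφ => (p φ hφ).1.2
  have hp1 : p1.Compatible := fun Y1 Y2 Z g1 g2 f1 f2 h1 h2 hcomm =>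
    congrArg (fun q => q.1.1) (hp g1 g2 h1 h2 hcomm)
  have hp2 : p2.Compatible := fun Y1 Y2 Z g1 g2 f1 f2 h1 h2 hcomm =>
    congrArg (fun q => q.1.2) (hp g1 g2 h1 h2 hcomm)
  obtain ⟨t1, ht1, ht1u⟩ := hA p1 hp1
  obtain ⟨t2, ht2, ht2u⟩ := hX p2 hp2
  have hcond : α.hom.app (op c) t1 = β.hom.app (op c) t2 := by
    refine sep Y hS (fun d φ hφ => ?_)
    rw [← elementwise_of% α.hom.naturality φ.op, ← elementwise_of% β.hom.naturality φ.op,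
      ht1 φ hφ, ht2 φ hφ]
    exact (p φ hφ).2
  refine ⟨⟨⟨t1, t2⟩, hcond⟩, fun d φ hφ => Subtype.ext (Prod.ext (ht1 φ hφ) (ht2 φ hφ)),
    fun t' ht' => Subtype.ext (Prod.ext
      (ht1u _ (fun d φ hφ => congrArg (fun q => q.1.1) (ht' φ hφ)))
      (ht2u _ (fun d φ hφ => congrArg (fun q => q.1.2) (ht' φ hφ))))⟩

/-- Explicit pointwise pullback sheaf. -/
def pbSheaf (α : A ⟶ Y) (β : X ⟶ Y) : Sheaf J (Type) :=
  ⟨pbPre α β, pbPre_isSheaf α β⟩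

def pbFst (α : A ⟶ Y) (β : X ⟶ Y) : pbSheaf α β ⟶ X :=
  ⟨{ app := fun c => TypeCat.ofHom fun p => p.1.2, naturality := fun _ _ _ => rfl }⟩

def pbSnd (α : A ⟶ Y) (β : X ⟶ Y) : pbSheaf α β ⟶ A :=
  ⟨{ app := fun c => TypeCat.ofHom fun p => p.1.1, naturality := fun _ _ _ => rfl }⟩

lemma pb_w (α : A ⟶ Y) (β : X ⟶ Y) : pbSnd α β ≫ α = pbFst α β ≫ β := by
  apply Sheaf.hom_ext
  ext c p
  exact p.2

end Pullback

end Stmt10Aux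

namespace Stmt10Aux

variable {C : Type} [SmallCategory C] {J : GrothendieckTopology C}
variable {A X : Sheaf J (Type)}

lemma mono_injective (f : A ⟶ X) (hf : Mono f) {c : Cᵒᵖ}
    {a b : A.val.obj c} (hab : f.hom.app c a = f.hom.app c b) : a = b := by
  have h : pbSnd f f = pbFst f f := (cancel_mono f).1 (pb_w f f)
  exact congrArg (fun (t : pbSheaf f f ⟶ A) => t.hom.app c ⟨⟨a, b⟩, hab⟩) h

lemma exists_preimage (f : A ⟶ X) (hf : Mono f) {c : Cᵒᵖ}
    (x : X.val.obj c) (hx : covSieve (fun _ : Unit => f) x ∈ J c.unop) :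
    ∃ a, f.hom.app c a = x := by
  have hA := (isSheaf_iff_isSheaf_of_type _ _).1 A.cond _ hx
  let fam : Presieve.FamilyOfElements A.val (covSieve (fun _ : Unit => f) x).arrows :=
    fun d φ hφ => hφ.choose_spec.choose
  have hfam_spec : ∀ {d} (φ : d ⟶ c.unop) (hφ : covSieve (fun _ : Unit => f) x φ),
      f.hom.app (op d) (fam φ hφ) = X.val.map φ.op x :=
    fun φ hφ => hφ.choose_spec.choose_spec
  have hcomp : fam.Compatible := by
    intro Y1 Y2 Z g1 g2 f1 f2 h1 h2 hcomm
    apply mono_injective f hf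
    rw [elementwise_of% f.hom.naturality g1.op, elementwise_of% f.hom.naturality g2.op,
      hfam_spec f1 h1, hfam_spec f2 h2, ← FunctorToTypes.map_comp_apply,
      ← FunctorToTypes.map_comp_apply, ← op_comp, ← op_comp, hcomm]
  obtain ⟨a, ha, _⟩ := hA fam hcomp
  refine ⟨a, sep X hx (fun d φ hφ => ?_)⟩
  rw [← elementwise_of% f.hom.naturality φ.op, ha φ hφ, hfam_spec φ hφ]

lemma mem_local {I : Type*} {As : I → Sheaf J (Type)} {X' : Sheaf J (Type)}
    (f : ∀ i, As i ⟶ X') {c : Cᵒᵖ} (x : X'.val.obj c) (S : Sieve c.unop) (hS : S ∈ J c.unop)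
    (h : ∀ {d : C} (φ : d ⟶ c.unop), S φ → covSieve f (X'.val.map φ.op x) ∈ J d) :
    covSieve f x ∈ J c.unop :=
  J.transitive hS _ fun d φ hφ => by rw [covSieve_pullback]; exact h φ hφ

/-- `x` is locally in the image of `f`. -/
def Mem (f : A ⟶ X) {c : Cᵒᵖ} (x : X.val.obj c) : Prop :=
  covSieve (fun _ : Unit => f) x ∈ J c.unop

lemma mem_res (f : A ⟶ X) {c c' : Cᵒᵖ} (φ : c ⟶ c') {x : X.val.obj c} (hx : Mem f x) :
    Mem f (X.val.map φ x) := by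
  have h := J.pullback_stable φ.unop hx
  rwa [covSieve_pullback, Quiver.Hom.op_unop] at h

def toX {T : Type} : T ⊕ T → T := Sum.elim id id

lemma toX_map {T T' : Type} (g : T → T') (s : T ⊕ T) : toX (Sum.map g g s) = g (toX s) := by
  cases s <;> rfl

def ySetoid (f : A ⟶ X) (c : Cᵒᵖ) : Setoid (X.val.obj c ⊕ X.val.obj c) where
  r s t := s = t ∨ (toX s = toX t ∧ Mem f (toX s))
  iseqv := by
    constructor
    · exact fun s => Or.inl rfl
    · rintro s t (rfl | ⟨h1, h2⟩)
      · exact Or.inl rfl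
      · exact Or.inr ⟨h1.symm, h1 ▸ h2⟩
    · rintro s t u (rfl | ⟨h1, h2⟩) (rfl | ⟨h3, h4⟩)
      · exact Or.inl rfl
      · exact Or.inr ⟨h3, h4⟩
      · exact Or.inr ⟨h1, h2⟩
      · exact Or.inr ⟨h1.trans h3, h2⟩

/-- The pointwise cokernel-pair presheaf of (the locally-closed image of) `f`. -/
def Y0 (f : A ⟶ X) : Cᵒᵖ ⥤ Type where
  obj c := Quotient (ySetoid f c)
  map {c c'} φ := TypeCat.ofHom <| Quotient.map (Sum.map (X.val.map φ) (X.val.map φ)) (by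
    rintro s t (rfl | ⟨h1, h2⟩)
    · exact Or.inl rfl
    · refine Or.inr ⟨?_, ?_⟩
      · rw [toX_map, toX_map, h1]
      · rw [toX_map]; exact mem_res f φ h2)
  map_id c := by
    ext q
    obtain ⟨s, rfl⟩ := Quotient.exists_rep q
    exact congrArg (Quotient.mk _) (by cases s <;> simp)
  map_comp φ ψ := by
    ext q
    obtain ⟨s, rfl⟩ := Quotient.exists_rep q
    exact congrArg (Quotient.mk _) (by cases s <;> simp)

def u0 (f : A ⟶ X) : X.val ⟶ Y0 f where
  app c := TypeCat.ofHom fun x => Quotient.mk _ (Sum.inl x)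
  naturality c c' φ := rfl

def v0 (f : A ⟶ X) : X.val ⟶ Y0 f where
  app c := TypeCat.ofHom fun x => Quotient.mk _ (Sum.inr x)
  naturality c c' φ := rfl

lemma u0_eq_v0_iff (f : A ⟶ X) {c : Cᵒᵖ} (x : X.val.obj c) :
    (u0 f).app c x = (v0 f).app c x ↔ Mem f x := by
  constructor
  · intro h
    rcases Quotient.exact h with h' | ⟨_, h2⟩
    · exact absurd h' (by simp)
    · exact h2
  · intro h
    exact Quotient.sound (Or.inr ⟨rfl, h⟩)

end Stmt10Aux

namespace Stmt10Aux

variable {C : Type} [SmallCategory C] {J : GrothendieckTopology C}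
variable {A X : Sheaf J (Type)}

/-- The sheafified pointwise cokernel pair. -/
noncomputable def Ysh (f : A ⟶ X) : Sheaf J (Type) :=
  ⟨J.sheafify (Y0 f), J.sheafify_isSheaf _⟩

noncomputable def uu (f : A ⟶ X) : X ⟶ Ysh f := ⟨u0 f ≫ J.toSheafify (Y0 f)⟩

noncomputable def vv (f : A ⟶ X) : X ⟶ Ysh f := ⟨v0 f ≫ J.toSheafify (Y0 f)⟩

lemma uv_eq_of_mem (f : A ⟶ X) {c : Cᵒᵖ} (x : X.val.obj c) (h : Mem f x) :
    (uu f).hom.app c x = (vv f).hom.app c x :=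
  congrArg ((J.toSheafify (Y0 f)).app c) ((u0_eq_v0_iff f x).2 h)

lemma mem_of_uv_eq (f : A ⟶ X) {c : Cᵒᵖ} (x : X.val.obj c)
    (h : (uu f).hom.app c x = (vv f).hom.app c x) : Mem f x := by
  have hs := @Presheaf.equalizerSieve_mem C _ (Type) _ _ _ _ _ J (Y0 f)
    (J.sheafify (Y0 f)) (J.toSheafify (Y0 f)) (Presheaf.isLocallyInjective_toSheafify J (Y0 f))
    c ((u0 f).app c x) ((v0 f).app c x) h
  refine mem_local (fun _ : Unit => f) x _ hs (fun {d} φ hφ => ?_)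
  exact (u0_eq_v0_iff f (X.val.map φ.op x)).1 hφ

lemma pair_ljs (f : A ⟶ X) :
    LJS (fun b : Bool => (bif b then uu f else vv f : X ⟶ Ysh f)) := by
  intro c y
  have him := @Presheaf.imageSieve_mem C _ J (Type) _ _ _ _ _ (Y0 f)
    (J.sheafify (Y0 f)) (J.toSheafify (Y0 f))
    (Presheaf.isLocallySurjective_toSheafify J (Y0 f)) c y
  refine J.superset_covering ?_ him
  rintro d φ ⟨t, ht⟩
  obtain ⟨s, rfl⟩ := Quotient.exists_rep t
  cases s with
  | inl x => exact ⟨true, x, ht⟩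
  | inr x => exact ⟨false, x, ht⟩

end Stmt10Aux

namespace Stmt10Aux

variable {C : Type} [SmallCategory C] {J : GrothendieckTopology C}
variable {A X : Sheaf J (Type)}

lemma Ysh_compact (f : A ⟶ X) (hX : IsCompactObj X) : IsCompactObj (Ysh f) := by
  intro I As fs hJE
  classical
  have hLJS : LJS fs := jointlyEpic_ljs fs hJE
  have hu : LJS (fun i : I => pbFst (fs i) (uu f)) := by
    intro c x
    refine J.superset_covering ?_ (hLJS c ((uu f).hom.app c x))
    rintro d φ ⟨i, a, ha⟩
    refine ⟨i, ⟨⟨a, X.val.map φ.op x⟩, ?_⟩, rfl⟩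
    rw [ha]
    exact ((elementwise_of% (uu f).hom.naturality φ.op) x).symm
  have hv : LJS (fun i : I => pbFst (fs i) (vv f)) := by
    intro c x
    refine J.superset_covering ?_ (hLJS c ((vv f).hom.app c x))
    rintro d φ ⟨i, a, ha⟩
    refine ⟨i, ⟨⟨a, X.val.map φ.op x⟩, ?_⟩, rfl⟩
    rw [ha]
    exact ((elementwise_of% (vv f).hom.naturality φ.op) x).symm
  obtain ⟨s1, hs1⟩ := hX _ _ (ljs_jointlyEpic _ hu)
  obtain ⟨s2, hs2⟩ := hX _ _ (ljs_jointlyEpic _ hv)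
  refine ⟨s1 ∪ s2, ?_⟩
  intro Z g h hgh
  have hu' : uu f ≫ g = uu f ≫ h := by
    apply hs1
    intro i
    rw [← Category.assoc, ← Category.assoc, ← pb_w (fs i.1) (uu f),
      Category.assoc, Category.assoc, hgh ⟨i.1, Finset.mem_union_left _ i.2⟩]
  have hv' : vv f ≫ g = vv f ≫ h := by
    apply hs2
    intro i
    rw [← Category.assoc, ← Category.assoc, ← pb_w (fs i.1) (vv f),
      Category.assoc, Category.assoc, hgh ⟨i.1, Finset.mem_union_right _ i.2⟩]
  refine (ljs_jointlyEpic _ (pair_ljs f)) g h ?_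
  rintro (_ | _)
  · exact hv'
  · exact hu'

end Stmt10Aux

open Stmt10Aux

theorem stmt10 {C : Type} [SmallCategory C] (J : GrothendieckTopology C)
    {A X : Sheaf J (Type)} (hA : IsCompactObj A) (hX : IsCompactObj X)
    (f : A ⟶ X) (hf : Mono f) :
    ∃ (Y : Sheaf J (Type)), IsCompactObj Y ∧
      ∃ (u v : X ⟶ Y), f ≫ u = f ≫ v ∧
        ∀ ⦃B : Sheaf J (Type)⦄, IsCompactObj B → ∀ (g : B ⟶ X),
          g ≫ u = g ≫ v → ∃! m : B ⟶ A, m ≫ f = g := by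
  refine ⟨Ysh f, Ysh_compact f hX, uu f, vv f, ?_, ?_⟩
  · apply Sheaf.hom_ext
    ext c a
    show (uu f).hom.app c (f.hom.app c a) = (vv f).hom.app c (f.hom.app c a)
    exact uv_eq_of_mem f _ (covSieve_id_mem (fun _ : Unit => f) () a)
  · intro B _ g hg
    have hmem : ∀ (c : Cᵒᵖ) (b : B.val.obj c), ∃ a, f.hom.app c a = g.hom.app c b := by
      intro c b
      refine exists_preimage f hf _ (mem_of_uv_eq f _ ?_)
      have h1 := congrArg (fun (t : B ⟶ Ysh f) => t.hom.app c b) hg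
      simpa using h1
    choose m hm using hmem
    have hnat : ∀ {c c' : Cᵒᵖ} (φ : c ⟶ c'), ∀ b,
        m c' (B.val.map φ b) = A.val.map φ (m c b) := by
      intro c c' φ b
      apply mono_injective f hf
      rw [hm, elementwise_of% f.hom.naturality φ, hm, ← elementwise_of% g.hom.naturality φ]
    refine ⟨⟨{ app := fun c => TypeCat.ofHom (m c), naturality := fun c c' φ => by ext b; exact hnat φ b }⟩, ?_, ?_⟩
    · apply Sheaf.hom_ext
      ext c b
      show f.hom.app c (m c b) = g.hom.app c b
      exact hm c b
    · intro m' hm'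
      apply (cancel_mono f).1
      apply Sheaf.hom_ext
      ext c b
      show f.hom.app c (m'.hom.app c b) = f.hom.app c (m c b)
      rw [hm c b]
      exact congrArg (fun (t : B ⟶ X) => t.hom.app c b) hm'
end

section
/- Let (C,J) be a small site such that the supercompact objects of E = Sh(C,J) form a separating family, and let C_s be a small full subcategory of E containing one representative of each isomorphism class of supercompact objects. Then there exists a Grothendieck topology J_r on C_s whose covering sieves are exactly the sieves containing a morphism that is an epimorphism in E, and there is an equivalence of categories E ≌ Sh(C_s, J_r). -/
open CategoryTheory CategoryTheory.Limits Opposite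

universe w v u

namespace Stmt11Aux

variable {C : Type} [SmallCategory C] (J : GrothendieckTopology C)

/-- The canonical functor from `C` to sheaves, i.e. sheafified yoneda. -/
noncomputable def L : C ⥤ Sheaf J (Type) := yoneda ⋙ presheafToSheaf J _

/-- Maps out of sheafified representables are elements. -/
noncomputable def Φ {c : C} {Y : Sheaf J (Type)} : (((L J).obj c) ⟶ Y) ≃ Y.val.obj (op c) :=
  (((sheafificationAdjunction J (Type)).homEquiv (yoneda.obj c) Y).trans yonedaEquiv)

lemma Φ_apply {c : C} {Y : Sheaf J (Type)} (ψ : ((L J).obj c) ⟶ Y) :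
    Φ J ψ = ψ.hom.app (op c) ((toSheafify J (yoneda.obj c)).app (op c) (𝟙 c)) := by
  simp only [Φ, Equiv.trans_apply, Adjunction.homEquiv_unit, yonedaEquiv_apply,
    sheafificationAdjunction_unit_app]
  rfl

lemma Φ_comp {c : C} {Y Z : Sheaf J (Type)} (ψ : ((L J).obj c) ⟶ Y) (f : Y ⟶ Z) :
    Φ J (ψ ≫ f) = f.hom.app (op c) (Φ J ψ) := by
  simp [Φ_apply]
  rfl

/-- naturality of the sheafification unit, in elements. -/
lemma unit_nat {P Q : Cᵒᵖ ⥤ Type} (f : P ⟶ Q) (U : Cᵒᵖ) (p : P.obj U) :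
    ((presheafToSheaf J _).map f).hom.app U ((toSheafify J P).app U p) =
      (toSheafify J Q).app U (f.app U p) :=
  (ConcreteCategory.congr_hom (congr_app (toSheafify_naturality J f) U) p).symm

lemma Φ_Lmap {c' c : C} (g : c' ⟶ c) :
    Φ J ((L J).map g) = (toSheafify J (yoneda.obj c)).app (op c') g := by
  rw [Φ_apply]
  have h1 : ((L J).map g).hom.app (op c')
        ((toSheafify J (yoneda.obj c')).app (op c') (𝟙 c')) =
      (toSheafify J (yoneda.obj c)).app (op c') ((yoneda.map g).app (op c') (𝟙 c')) :=
    unit_nat J (yoneda.map g) (op c') (𝟙 c')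
  rw [h1]
  simp
  rfl

/-- naturality of the sheafification unit at `yoneda.obj c`, in elements. -/
lemma eta_nat {c'' c' c : C} (h : c'' ⟶ c') (v : c' ⟶ c) :
    ((L J).obj c).val.map h.op ((toSheafify J (yoneda.obj c)).app (op c') v) =
      (toSheafify J (yoneda.obj c)).app (op c'') (h ≫ v) := by
  have h2 := NatTrans.naturality_apply (F := yoneda.obj c) (G := ((L J).obj c).val)
    (toSheafify J (yoneda.obj c)) h.op v
  simp only [yoneda_obj_map, Quiver.Hom.unop_op] at h2
  exact h2.symm

lemma Φ_Lmap_comp {c' c : C} (g : c' ⟶ c) {Y : Sheaf J (Type)} (ψ : ((L J).obj c) ⟶ Y) :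
    Φ J ((L J).map g ≫ ψ) = Y.val.map g.op (Φ J ψ) := by
  rw [Φ_comp, Φ_Lmap, Φ_apply]
  have := NatTrans.naturality_apply ψ.hom g.op ((toSheafify J (yoneda.obj c)).app (op c) (𝟙 c))
  rw [eta_nat] at this
  simpa using this

/-- The sieve on `c` of arrows along which the restriction of `x` is hit by some member of `S`. -/
def locSieve {X : Sheaf J (Type)} (S : Sieve X) {c : C} (x : X.val.obj (op c)) : Sieve c where
  arrows c' g := ∃ (Y : Sheaf J (Type)) (f : Y ⟶ X), S f ∧
    ∃ y : Y.val.obj (op c'), f.hom.app (op c') y = X.val.map g.op x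
  downward_closed := by
    rintro c' c'' g ⟨Y, f, hf, y, hy⟩ h
    exact ⟨Y, f, hf, Y.val.map h.op y, by
      rw [FunctorToTypes.naturality, hy, ← FunctorToTypes.map_comp_apply, ← op_comp]⟩

lemma locSieve_pullback {X : Sheaf J (Type)} (S : Sieve X) {c : C} (x : X.val.obj (op c))
    {c' : C} (g : c' ⟶ c) :
    (locSieve J S x).pullback g = locSieve J S (X.val.map g.op x) := by
  ext c'' h
  simp only [Sieve.pullback_apply, locSieve, ← FunctorToTypes.map_comp_apply, ← op_comp]

/-- The "jointly locally surjective" topology on the topos of sheaves. -/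
def K : GrothendieckTopology (Sheaf J (Type)) where
  sieves X S := ∀ (c : C) (x : X.val.obj (op c)), locSieve J S x ∈ J c
  top_mem' := by
    intro X c x
    refine J.superset_covering (fun c' g _ => ?_) (J.top_mem c)
    exact ⟨X, 𝟙 X, trivial, X.val.map g.op x, rfl⟩
  pullback_stable' := by
    intro X Y S m hS c y
    refine J.superset_covering (fun c' g hg => ?_) (hS c (m.hom.app (op c) y))
    obtain ⟨Z, f, hf, z, hz⟩ := hg
    -- build the pullback of `f` and `m`
    let zh : ((L J).obj c') ⟶ Z := (Φ J).symm z
    let yh : ((L J).obj c') ⟶ Y := (Φ J).symm (Y.val.map g.op y)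
    have heq : zh ≫ f = yh ≫ m := by
      apply (Φ J).injective
      rw [Φ_comp, Φ_comp, Equiv.apply_symm_apply, Equiv.apply_symm_apply, hz,
        FunctorToTypes.naturality]
    refine ⟨pullback f m, pullback.snd f m, ?_, Φ J (pullback.lift zh yh heq), ?_⟩
    · change S (pullback.snd f m ≫ m)
      rw [← pullback.condition]
      exact S.downward_closed hf _
    · rw [← Φ_comp, pullback.lift_snd, Equiv.apply_symm_apply]
  transitive' := by
    intro X S hS R hR c x
    refine J.transitive (hS c x) _ (fun c' g hg => ?_)
    obtain ⟨Y, f, hf, y, hy⟩ := hg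
    rw [locSieve_pullback]
    refine J.superset_covering (fun c'' h hh => ?_) (hR hf c' y)
    obtain ⟨Z, f', hf', z, hz⟩ := hh
    refine ⟨Z, f' ≫ f, hf', z, ?_⟩
    have : (f' ≫ f).hom.app (op c'') z = f.hom.app (op c'') (f'.hom.app (op c'') z) := rfl
    rw [this, hz, NatTrans.naturality_apply f.hom h.op, hy]

lemma K_mem_iff {X : Sheaf J (Type)} (S : Sieve X) :
    S ∈ K J X ↔ ∀ (c : C) (x : X.val.obj (op c)), locSieve J S x ∈ J c := Iff.rfl

/-- covering sieves for `K` are jointly epimorphic families. -/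
lemma K_jointlyEpic {X : Sheaf J (Type)} {S : Sieve X} (hS : S ∈ K J X) {W : Sheaf J (Type)}
    (g h : X ⟶ W) (H : ∀ ⦃Y : Sheaf J (Type)⦄ (f : Y ⟶ X), S f → f ≫ g = f ≫ h) : g = h := by
  apply Sheaf.hom_ext
  ext ⟨c⟩ x
  apply (Presieve.IsSheaf.isSeparated
    ((isSheaf_iff_isSheaf_of_type _ _).1 W.cond) _ (hS c x)).ext
  rintro c' f' ⟨Y, u, hu, y, huy⟩
  have h1 := NatTrans.naturality_apply g.hom f'.op x
  have h2 := NatTrans.naturality_apply h.hom f'.op x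
  simp only [TypeCat.Fun.toFun_apply]
  rw [← h1, ← h2, ← huy]
  exact (ConcreteCategory.congr_hom (congr_app (congr_arg (fun φ => φ.hom) (H u hu)) (op c')) y :)

/-- `L` is cover dense for `K`. -/
lemma L_coverDense : (L J).IsCoverDense (K J) := by
  constructor
  intro X c x
  have hmem : locSieve J (Sieve.coverByImage (L J) X) x (𝟙 c) := by
    refine ⟨(L J).obj c, (Φ J).symm x, Presieve.in_coverByImage _ _,
      (toSheafify J (yoneda.obj c)).app (op c) (𝟙 c), ?_⟩
    rw [← Φ_apply, Equiv.apply_symm_apply]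
    simp
  exact (Sieve.id_mem_iff_eq_top.1 hmem) ▸ J.top_mem c

/-- pushing forward along `L` of covering sieves. -/
lemma L_pushforward_mem {c : C} {S : Sieve c} (hS : S ∈ J c) :
    S.functorPushforward (L J) ∈ K J ((L J).obj c) := by
  intro c₀ x
  refine J.transitive (Presheaf.imageSieve_mem J (toSheafify J (yoneda.obj c)) x) _
    (fun c₁ g hg => ?_)
  obtain ⟨v, hv⟩ := hg
  have hv' : (toSheafify J (yoneda.obj c)).app (op c₁) v = ((L J).obj c).val.map g.op x := hv
  rw [locSieve_pullback]
  refine J.superset_covering (fun c₂ h hh => ?_) (J.pullback_stable v hS)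
  refine ⟨(L J).obj c₂, (L J).map (h ≫ v), ⟨c₂, h ≫ v, 𝟙 _, hh, (Category.id_comp _).symm⟩,
    (toSheafify J (yoneda.obj c₂)).app (op c₂) (𝟙 c₂), ?_⟩
  rw [← Φ_apply, Φ_Lmap, ← hv', eta_nat]

lemma L_pushforward_mem_iff {c : C} {S : Sieve c} :
    S.functorPushforward (L J) ∈ K J ((L J).obj c) ↔ S ∈ J c := by
  refine ⟨fun hS => ?_, L_pushforward_mem J⟩
  have h0 := hS c ((toSheafify J (yoneda.obj c)).app (op c) (𝟙 c))
  refine J.transitive h0 _ (fun c' g hg => ?_)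
  obtain ⟨Y, f, hf, y, hy⟩ := hg
  obtain ⟨d, s, h', hs, rfl⟩ := hf
  rw [eta_nat] at hy
  simp only [Category.comp_id] at hy
  set y' := h'.hom.app (op c') y with hy'
  have hys : ((L J).map s).hom.app (op c') y' = (toSheafify J (yoneda.obj c)).app (op c') g := by
    rw [hy']
    exact hy
  refine J.transitive (Presheaf.imageSieve_mem J (toSheafify J (yoneda.obj d)) y') _
    (fun e k hk => ?_)
  obtain ⟨v, hv⟩ := hk
  have hv2 : (toSheafify J (yoneda.obj d)).app (op e) v = ((L J).obj d).val.map k.op y' := hv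
  have keyeq : (toSheafify J (yoneda.obj c)).app (op e) (v ≫ s) =
      (toSheafify J (yoneda.obj c)).app (op e) (k ≫ g) := by
    have e1 : ((L J).map s).hom.app (op e) ((toSheafify J (yoneda.obj d)).app (op e) v) =
        (toSheafify J (yoneda.obj c)).app (op e) ((yoneda.map s).app (op e) v) :=
      unit_nat J (yoneda.map s) (op e) v
    simp only [yoneda_map_app, TypeCat.ofHom_apply] at e1
    rw [← e1, hv2, NatTrans.naturality_apply ((L J).map s).hom k.op, hys, eta_nat]
  have hloc := Presheaf.IsLocallyInjective.equalizerSieve_mem (J := J)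
    (FD := TypeCat.Fun) (CD := fun X => X) (φ := toSheafify J (yoneda.obj c)) (v ≫ s) (k ≫ g) keyeq
  refine J.superset_covering (fun e' m hm => ?_) hloc
  have hm' : m ≫ v ≫ s = m ≫ k ≫ g := hm
  change S ((m ≫ k) ≫ g)
  rw [Category.assoc, ← hm']
  simpa using S.downward_closed hs (m ≫ v)

lemma L_locallyFull : (L J).IsLocallyFull (K J) := by
  constructor
  intro U V f
  apply L_pushforward_mem
  refine J.superset_covering (fun W g hg => ?_)
    (Presheaf.imageSieve_mem J (toSheafify J (yoneda.obj V)) (Φ J f))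
  obtain ⟨v, hv⟩ := hg
  refine ⟨v, (Φ J).injective ?_⟩
  rw [Φ_Lmap, Φ_Lmap_comp]
  exact hv

lemma L_locallyFaithful : (L J).IsLocallyFaithful (K J) := by
  constructor
  intro U V f₁ f₂ hf
  apply L_pushforward_mem
  have : (toSheafify J (yoneda.obj V)).app (op U) f₁ =
      (toSheafify J (yoneda.obj V)).app (op U) f₂ := by
    rw [← Φ_Lmap, ← Φ_Lmap, hf]
  have hloc := Presheaf.IsLocallyInjective.equalizerSieve_mem (J := J)
    (FD := TypeCat.Fun) (CD := fun X => X) (φ := toSheafify J (yoneda.obj V)) f₁ f₂ this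
  rw [Sieve.equalizer_eq_equalizerSieve]
  exact hloc

instance L_denseSubsite : (L J).IsDenseSubsite J (K J) :=
  letI := L_coverDense J
  letI := L_locallyFull J
  letI := L_locallyFaithful J
  { functorPushforward_mem_iff := L_pushforward_mem_iff J }

end Stmt11Aux
theorem stmt11 {C : Type} [SmallCategory C] (J : GrothendieckTopology C)
    -- the supercompact objects form a separating family
    (hsep : ∀ ⦃X Y : Sheaf J (Type)⦄ (g h : X ⟶ Y),
      (∀ (S : Sheaf J (Type)), IsSupercompact S → ∀ (u : S ⟶ X), u ≫ g = u ≫ h) →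
        g = h)
    -- `Cs` is a small full subcategory of the sheaf topos, embedded by `ι`, ...
    (Cs : Type) [SmallCategory Cs] (ι : Cs ⥤ Sheaf J (Type))
    [ι.Full] [ι.Faithful]
    -- ... consisting of supercompact objects, ...
    (hobj : ∀ c : Cs, IsSupercompact (ι.obj c))
    -- ... containing a representative of each isomorphism class of supercompacts, ...
    (hrep : ∀ X : Sheaf J (Type), IsSupercompact X → ∃ c : Cs, Nonempty (ι.obj c ≅ X))
    -- ... exactly one from each class.
    (huniq : ∀ c c' : Cs, Nonempty (ι.obj c ≅ ι.obj c') → c = c') :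
    ∃ Jr : GrothendieckTopology Cs,
      (∀ (c : Cs) (S : Sieve c),
        S ∈ Jr c ↔ ∃ (d : Cs) (g : d ⟶ c), S.arrows g ∧ Epi (ι.map g)) ∧
      Nonempty (Sheaf J (Type) ≌ Sheaf Jr (Type)) := by
  classical
  -- every object of the topos receives an epimorphism from the "union of supercompact images"
  -- subsheaf; hence `ι` is cover dense for `K`.
  have hdense : ι.IsCoverDense (Stmt11Aux.K J) := by
    constructor
    intro X
    -- the union of all images of maps from objects of `Cs`
    let U₀ : Subfunctor X.val :=
      { obj := fun c => {x | ∃ (e : Cs) (u : ι.obj e ⟶ X) (y : (ι.obj e).val.obj c),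
          u.hom.app c y = x}
        map := by
          rintro c c' i x ⟨e, u, y, hy⟩
          exact ⟨e, u, (ι.obj e).val.map i y, by rw [FunctorToTypes.naturality, hy]⟩ }
    have hX : Presieve.IsSheaf J X.val := (isSheaf_iff_isSheaf_of_type _ _).1 X.cond
    let Us : Sheaf J (Type) := ⟨(U₀.sheafify J).toFunctor,
      (isSheaf_iff_isSheaf_of_type _ _).2 (U₀.sheafify_isSheaf hX)⟩
    let iS : Us ⟶ X := ⟨(U₀.sheafify J).ι⟩
    have hepi : Epi iS := by
      constructor
      intro Z g h hgh
      apply hsep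
      intro W hW u
      obtain ⟨e, ⟨iso⟩⟩ := hrep W hW
      let w : ι.obj e ⟶ Us := ⟨{
        app := fun c => TypeCat.ofHom (fun z => ⟨(iso.hom ≫ u).hom.app c z,
          (U₀.le_sheafify J) c ⟨e, iso.hom ≫ u, z, rfl⟩⟩)
        naturality := by
          intro c c' i
          ext z
          apply Subtype.ext
          exact NatTrans.naturality_apply (iso.hom ≫ u).hom i z }⟩
      have hw : w ≫ iS = iso.hom ≫ u := rfl
      have h2 : (iso.hom ≫ u) ≫ g = (iso.hom ≫ u) ≫ h := by
        rw [← hw, Category.assoc, Category.assoc, hgh]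
      exact (cancel_epi iso.hom).1 (by simpa only [Category.assoc] using h2)
    haveI : Sheaf.IsLocallySurjective iS := (Sheaf.isLocallySurjective_iff_epi iS).2 hepi
    intro c₀ x
    refine J.transitive (Presheaf.imageSieve_mem J iS.hom x) _ (fun c' g hg => ?_)
    obtain ⟨⟨yv, hy2'⟩, hy⟩ := hg
    have hy1 : yv = X.val.map g.op x := hy
    rw [Stmt11Aux.locSieve_pullback]
    have hy2 : U₀.sieveOfSection yv ∈ J c' := hy2'
    rw [hy1] at hy2
    refine J.superset_covering (fun c'' h hh => ?_) hy2
    have hh' : X.val.map h.op (X.val.map g.op x) ∈ U₀.obj (op c'') := hh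
    obtain ⟨e, u, z, hz⟩ := hh'
    exact ⟨ι.obj e, u, Presieve.in_coverByImage ι u, z, hz⟩
  refine ⟨ι.inducedTopology (Stmt11Aux.K J), fun c S => ?_, ?_⟩
  · constructor
    · intro hS
      have hS' : S.functorPushforward ι ∈ Stmt11Aux.K J (ι.obj c) :=
        (ι.mem_inducedTopology_iff_of_isCoverDense (Stmt11Aux.K J) S).1 hS
      -- the family of all members of the pushforward sieve with source in `Cs`
      -- is jointly epimorphic
      have hJE : JointlyEpic (A := fun i : (Σ e : Cs,
            {m : ι.obj e ⟶ ι.obj c // (S.functorPushforward ι).arrows m}) => ι.obj i.1)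
          (fun i => i.2.val) := by
        intro W g h hi
        apply Stmt11Aux.K_jointlyEpic J hS' g h
        intro Y f hf
        apply hsep
        intro W' hW' u
        obtain ⟨e, ⟨iso⟩⟩ := hrep W' hW'
        have hm : (S.functorPushforward ι).arrows (iso.hom ≫ u ≫ f) :=
          (S.functorPushforward ι).downward_closed hf (iso.hom ≫ u)
        have := hi ⟨e, ⟨iso.hom ≫ u ≫ f, hm⟩⟩
        simp only [Category.assoc] at this ⊢
        exact (cancel_epi iso.hom).1 this
      obtain ⟨i, hepi⟩ := hobj c _ _ hJE
      obtain ⟨d, s, h', hs, he⟩ := i.2.2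
      rw [he] at hepi
      haveI := hepi
      exact ⟨d, s, hs, epi_of_epi h' (ι.map s)⟩
    · rintro ⟨d, g₀, hg₀, hepi⟩
      haveI := hepi
      haveI : Sheaf.IsLocallySurjective (ι.map g₀) :=
        (Sheaf.isLocallySurjective_iff_epi (ι.map g₀)).2 hepi
      apply (ι.mem_inducedTopology_iff_of_isCoverDense (Stmt11Aux.K J) S).2
      intro c₀ x
      refine J.superset_covering (fun c' g hg => ?_)
        (Presheaf.imageSieve_mem J (ι.map g₀).hom x)
      obtain ⟨y, hy⟩ := hg
      exact ⟨ι.obj d, ι.map g₀, ⟨d, g₀, 𝟙 _, hg₀, (Category.id_comp _).symm⟩, y, hy⟩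
  · have e₁ : Sheaf J (Type) ≌ Sheaf (Stmt11Aux.K J) (Type) :=
      Functor.IsDenseSubsite.sheafEquiv J (Stmt11Aux.K J) (Stmt11Aux.L J) (Type)
    have e₂ : Sheaf (ι.inducedTopology (Stmt11Aux.K J)) (Type) ≌ Sheaf (Stmt11Aux.K J) (Type) :=
      ι.sheafInducedTopologyEquivOfIsCoverDense (Stmt11Aux.K J) (Type)
    exact ⟨e₁.trans e₂.symm⟩
end

section
/- Let (C,J) be a small site and E = Sh(C,J). A morphism f : A → B of E is an epimorphism if and only if, in the pushout square of f along the unique morphism A → 1 to the terminal object (with pushout B/f), the induced morphism x : 1 → B/f is an isomorphism. -/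
open CategoryTheory CategoryTheory.Limits

theorem stmt12 {C : Type} [SmallCategory C] (J : GrothendieckTopology C)
    {A B : Sheaf J (Type)} (f : A ⟶ B) :
    Epi f ↔ IsIso (pushout.inr f (terminal.from A)) := by
  constructor
  · intro hf
    have hmono : Mono (pushout.inr f (terminal.from A)) := by
      have hsplit : SplitMono (pushout.inr f (terminal.from A)) :=
        ⟨terminal.from _, Subsingleton.elim _ _⟩
      exact hsplit.mono
    exact isIso_of_mono_of_epi _
  · intro h
    -- factor f as a locally surjective (epi) followed by a locally injective (mono) morphism
    let data := (Sheaf.locallySurjective J (Type)).factorizationData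
      (Sheaf.locallyInjective J (Type)) f
    have hi : Sheaf.IsLocallySurjective data.i := data.hi
    have hp : Sheaf.IsLocallyInjective data.p := data.hp
    have hiepi : Epi data.i := Sheaf.epi_of_isLocallySurjective data.i
    have hpmono : Mono data.p := Sheaf.mono_of_isLocallyInjective data.p
    -- The square A → Z → 1, A → 1 → 1 is a pushout since data.i is epi
    have eq1 : data.i ≫ terminal.from data.Z = terminal.from A ≫ 𝟙 (⊤_ _) :=
      Subsingleton.elim _ _
    have sq1 : IsPushout data.i (terminal.from A) (terminal.from data.Z) (𝟙 (⊤_ _)) := by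
      refine IsPushout.of_isColimit (PushoutCocone.IsColimit.mk eq1
        (fun s => s.inr) (fun s => ?_) (fun s => by simp) (fun s m h1 h2 => by simpa using h2))
      rw [← cancel_epi data.i, ← Category.assoc]
      have : data.i ≫ terminal.from data.Z = terminal.from A := Subsingleton.elim _ _
      rw [this, ← s.condition]
    have sq2 : IsPushout data.p (terminal.from data.Z)
        (pushout.inl data.p (terminal.from data.Z))
        (pushout.inr data.p (terminal.from data.Z)) :=
      IsPushout.of_hasPushout _ _
    have big : IsPushout f (terminal.from A)
        (pushout.inl data.p (terminal.from data.Z))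
        (pushout.inr data.p (terminal.from data.Z)) := by
      have := sq1.paste_horiz sq2
      rw [data.fac, Category.id_comp] at this
      exact this
    -- transfer the iso hypothesis to this pushout square
    have hiso : IsIso (pushout.inr data.p (terminal.from data.Z)) := by
      have heq : pushout.inr data.p (terminal.from data.Z) =
          pushout.inr f (terminal.from A) ≫ big.isoPushout.inv :=
        (big.inr_isoPushout_inv).symm
      rw [heq]
      infer_instance
    -- sheaf categories are adhesive, so the pushout along the mono data.p is a pullback
    have pb : IsPullback data.p (terminal.from data.Z)
        (pushout.inl data.p (terminal.from data.Z))
        (pushout.inr data.p (terminal.from data.Z)) :=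
      Adhesive.isPullback_of_isPushout_of_mono_left sq2
    -- construct an inverse to data.p using the pullback property
    have hcomm : 𝟙 B ≫ pushout.inl data.p (terminal.from data.Z) =
        terminal.from B ≫ pushout.inr data.p (terminal.from data.Z) := by
      rw [Category.id_comp]
      have h2 : pushout.inl data.p (terminal.from data.Z) ≫
          inv (pushout.inr data.p (terminal.from data.Z)) = terminal.from B :=
        Subsingleton.elim _ _
      rw [← h2, Category.assoc, IsIso.inv_hom_id, Category.comp_id]
    let l : B ⟶ data.Z := pb.lift (𝟙 B) (terminal.from B) hcomm
    have hl1 : l ≫ data.p = 𝟙 B := pb.lift_fst _ _ _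
    have hl2 : data.p ≫ l = 𝟙 data.Z := by
      rw [← cancel_mono data.p, Category.assoc, hl1, Category.comp_id, Category.id_comp]
    have hpiso : IsIso data.p := ⟨l, hl2, hl1⟩
    rw [← data.fac]
    exact epi_comp _ _
end

section
/- Let (C,J) be a small site, E = Sh(C,J), and C_s the full subcategory of E on the supercompact objects. If A is a supercompact object which is well-supported, then a morphism A → B of C_s is an epimorphism in the category C_s if and only if it is an epimorphism in E. -/
open CategoryTheory CategoryTheory.Limits CategoryTheory.GrothendieckTopology

universe w v u

/-- `f` is an epimorphism in the full subcategory of objects satisfying `P`. -/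
def EpiIn {C : Type u} [Category.{v} C] (P : C → Prop) {A B : C}
    (f : A ⟶ B) : Prop :=
  ∀ ⦃Y : C⦄, P Y → ∀ (g h : B ⟶ Y), f ≫ g = f ≫ h → g = h

section Aux

open Opposite

variable {C : Type} [SmallCategory C] {J : GrothendieckTopology C}

/-- The union of the set-theoretic images of a family of morphisms of sheaves, as a
subpresheaf of the codomain. -/
def famImage {I : Type} {A : I → Sheaf J (Type)} {X : Sheaf J (Type)}
    (f : ∀ i, A i ⟶ X) : Subfunctor X.val where
  obj U := {s | ∃ i t, (f i).hom.app U t = s}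
  map := by
    rintro U V g s ⟨i, t, rfl⟩
    exact ⟨i, (A i).val.map g t, (NatTrans.naturality_apply (f i).hom g t)⟩

/-- A family of morphisms of sheaves is jointly epimorphic iff every section of the codomain
locally lies in the union of the images. -/
theorem jointlyEpic_iff_cover {I : Type} {A : I → Sheaf J (Type)} {X : Sheaf J (Type)}
    (f : ∀ i, A i ⟶ X) :
    JointlyEpic f ↔
      ∀ (U : Cᵒᵖ) (s : X.val.obj U), (famImage f).sieveOfSection s ∈ J (unop U) := by
  constructor
  · intro hje U s
    set G : Subfunctor X.val := famImage f with hG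
    set G' : Subfunctor X.val := G.sheafify J with hG'
    have hX : Presieve.IsSheaf J X.val :=
      (isSheaf_iff_isSheaf_of_type _ _).1 X.cond
    let SY : Sheaf J (Type) :=
      ⟨G'.toFunctor, (isSheaf_iff_isSheaf_of_type _ _).2 (G.sheafify_isSheaf hX)⟩
    let i : SY ⟶ X := ⟨G'.ι⟩
    haveI : Mono i := (sheafToPresheaf J (Type)).mono_of_mono_map (by
        show Mono G'.ι
        infer_instance)
    -- each `f j` factors through `i`
    have hfac : ∀ j, (⟨Subfunctor.lift (f j).hom (G := G) (by rintro U _ ⟨x, rfl⟩; exact ⟨j, x, rfl⟩) ≫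
        Subfunctor.homOfLe (G.le_sheafify J)⟩ : A j ⟶ SY) ≫ i = f j := by
      intro j
      apply Sheaf.hom_ext
      show (Subfunctor.lift (f j).hom (G := G) _ ≫ Subfunctor.homOfLe _) ≫ G'.ι = (f j).hom
      rw [Category.assoc, Subfunctor.homOfLe_ι]; rfl
    -- `i` is an epimorphism, via its cokernel pair and joint epimorphicity
    have heq : pushout.inl i i = pushout.inr i i := by
      apply hje
      intro j
      rw [← hfac j, Category.assoc, Category.assoc, pushout.condition]
    haveI : Epi i := by
      constructor
      intro Z a b hab
      calc a = pushout.inl i i ≫ pushout.desc a b hab := (pushout.inl_desc _ _ _).symm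
        _ = pushout.inr i i ≫ pushout.desc a b hab := by rw [heq]
        _ = b := pushout.inr_desc _ _ _
    haveI : IsIso i := isIso_of_mono_of_epi i
    haveI : IsIso i.hom := by
      have : IsIso ((sheafToPresheaf J (Type)).map i) := inferInstance
      exact this
    haveI : IsIso (i.hom.app U) := inferInstance
    obtain ⟨t, ht⟩ := ((isIso_iff_bijective (i.hom.app U)).1 inferInstance).2 s
    have hmem : t.1 ∈ G'.obj U := t.2
    have : t.1 = s := ht
    rw [this] at hmem
    exact hmem
  · intro hc Y g h hw
    apply Sheaf.hom_ext
    ext U s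
    have hsep : Presieve.IsSeparated J Y.val :=
      ((isSheaf_iff_isSheaf_of_type _ _).1 Y.cond).isSeparated
    apply (hsep _ (hc U s)).ext
    intro V k hk
    obtain ⟨i, t, ht⟩ := hk
    have n1 : Y.val.map k.op (g.hom.app U s) = g.hom.app (op V) (X.val.map k.op s) :=
      (NatTrans.naturality_apply g.hom k.op s).symm
    have n2 : Y.val.map k.op (h.hom.app U s) = h.hom.app (op V) (X.val.map k.op s) :=
      (NatTrans.naturality_apply h.hom k.op s).symm
    show Y.val.map k.op (g.hom.app U s) = Y.val.map k.op (h.hom.app U s)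
    rw [n1, n2, ← ht]
    have e1 : g.hom.app (op V) ((f i).hom.app (op V) t) = ((f i) ≫ g).hom.app (op V) t := rfl
    have e2 : h.hom.app (op V) ((f i).hom.app (op V) t) = ((f i) ≫ h).hom.app (op V) t := rfl
    rw [e1, e2, hw i]

/-- Jointly epimorphic families of sheaves are stable under pullback. -/
theorem jointlyEpic_pullback {I : Type} {A : I → Sheaf J (Type)} {X B : Sheaf J (Type)}
    (f : ∀ i, A i ⟶ X) (q : B ⟶ X) (hje : JointlyEpic f) :
    JointlyEpic (fun i => pullback.snd (f i) q) := by
  rw [jointlyEpic_iff_cover] at hje ⊢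
  intro U s
  refine J.superset_covering ?_ (hje U (q.hom.app U s))
  rintro V k ⟨i, t, ht⟩
  -- the evaluation functor preserves pullbacks
  let ev : Sheaf J (Type) ⥤ Type := sheafToPresheaf J (Type) ⋙ (evaluation Cᵒᵖ (Type)).obj (op V)
  haveI : PreservesLimitsOfShape WalkingCospan ev := by
    infer_instance
  have hcomm : ev.map (f i) t = ev.map q (B.val.map k.op s) := by
    show (f i).hom.app (op V) t = q.hom.app (op V) (B.val.map k.op s)
    rw [ht]
    exact (NatTrans.naturality_apply q.hom k.op s).symm
  let e := PreservesPullback.iso ev (f i) q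
  let z : Types.PullbackObj (ev.map (f i)) (ev.map q) := ⟨(t, B.val.map k.op s), hcomm⟩
  let p : ev.obj (pullback (f i) q) := e.inv ((Types.pullbackIsoPullback _ _).inv z)
  refine ⟨i, p, ?_⟩
  show ev.map (pullback.snd (f i) q) p = B.val.map k.op s
  have h1 : e.inv ≫ ev.map (pullback.snd (f i) q) = pullback.snd (ev.map (f i)) (ev.map q) := by
    rw [Iso.inv_comp_eq, PreservesPullback.iso_hom_snd]
  have h2 : ev.map (pullback.snd (f i) q) p
      = pullback.snd (ev.map (f i)) (ev.map q) ((Types.pullbackIsoPullback _ _).inv z) :=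
    ConcreteCategory.congr_hom h1 ((Types.pullbackIsoPullback _ _).inv z)
  rw [h2, Types.pullbackIsoPullback_inv_snd_apply]

/-- A quotient of a supercompact sheaf is supercompact. -/
theorem isSupercompact_of_epi {B Q : Sheaf J (Type)} (hB : IsSupercompact B)
    (π : B ⟶ Q) [Epi π] : IsSupercompact Q := by
  intro I A f hje
  obtain ⟨i, hi⟩ := hB _ _ (jointlyEpic_pullback f π hje)
  haveI := hi
  have : Epi (pullback.snd (f i) π ≫ π) := epi_comp _ _
  rw [← pullback.condition] at this
  exact ⟨i, epi_of_epi (pullback.fst (f i) π) _⟩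

end Aux

theorem stmt13 {C : Type} [SmallCategory C] (J : GrothendieckTopology C)
    {A B : Sheaf J (Type)} (hA : IsSupercompact A) (hB : IsSupercompact B)
    (hws : Epi (terminal.from A)) (f : A ⟶ B) :
    EpiIn IsSupercompact f ↔ Epi f := by
  constructor
  · intro hepi
    constructor
    intro Y g h w
    -- the equalizer of `g` and `h`
    set m : equalizer g h ⟶ B := equalizer.ι g h with hm
    set k : A ⟶ equalizer g h := equalizer.lift f w with hk
    have hfm : k ≫ m = f := equalizer.lift_ι f w
    -- the equalizer is well-supported
    haveI : Epi (terminal.from (equalizer g h)) := by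
      have hA1 : k ≫ terminal.from (equalizer g h) = terminal.from A := terminal.comp_from k
      rw [← hA1] at hws
      exact epi_of_epi k _
    -- collapse the equalizer to a point
    set t : equalizer g h ⟶ ⊤_ _ := terminal.from _ with htt
    haveI : Epi t := by rw [htt]; infer_instance
    haveI : Epi (pushout.inl m t) := inferInstance
    have hQ : IsSupercompact (pushout m t) := isSupercompact_of_epi hB (pushout.inl m t)
    have hmt : m ≫ terminal.from B = t := terminal.comp_from m
    have hfe : f ≫ pushout.inl m t = f ≫ (terminal.from B ≫ pushout.inr m t) := by
      rw [← hfm, Category.assoc, pushout.condition, Category.assoc, ← hmt, Category.assoc]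
    have heq : pushout.inl m t = terminal.from B ≫ pushout.inr m t := hepi hQ _ _ hfe
    -- by adhesivity, the pushout square is a pullback, so `m` is split epi
    have hpo : IsPushout m t (pushout.inl m t) (pushout.inr m t) := IsPushout.of_hasPushout m t
    have hpb : IsPullback m t (pushout.inl m t) (pushout.inr m t) :=
      Adhesive.isPullback_of_isPushout_of_mono_left hpo
    have hw2 : 𝟙 B ≫ pushout.inl m t = terminal.from B ≫ pushout.inr m t := by
      rw [Category.id_comp]; exact heq
    have hl : hpb.lift (𝟙 B) (terminal.from B) hw2 ≫ m = 𝟙 B := hpb.lift_fst _ _ _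
    calc g = (𝟙 B) ≫ g := (Category.id_comp g).symm
      _ = hpb.lift (𝟙 B) (terminal.from B) hw2 ≫ m ≫ g := by
          rw [← Category.assoc, hl]
      _ = hpb.lift (𝟙 B) (terminal.from B) hw2 ≫ m ≫ h := by rw [equalizer.condition g h]
      _ = (𝟙 B) ≫ h := by rw [← Category.assoc, hl]
      _ = h := Category.id_comp h
  · intro hepi Y hY g h w
    haveI := hepi
    rwa [cancel_epi] at w
end

section
/- Let (C,J) be a small site and E = Sh(C,J), with initial object 0 and terminal object 1. The following are equivalent: (1) E is two-valued, i.e. 0 is not isomorphic to 1 and every subterminal object of E is either initial or terminal; (2) every object of E is either well-supported or initial, but not both; (3) 0 is not isomorphic to 1 and E has a separating family consisting of well-supported objects. -/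
open CategoryTheory CategoryTheory.Limits

section Aux

variable {C : Type} [SmallCategory C] (J : GrothendieckTopology C)

/-- In a two-valued sheaf topos, every object is well-supported or initial. -/
lemma stmt14_ws_or_init
    (h1 : ∀ X : Sheaf J (Type), Mono (terminal.from X) →
      (Nonempty (IsInitial X) ∨ Nonempty (IsTerminal X)))
    (X : Sheaf J (Type)) :
    Epi (terminal.from X) ∨ Nonempty (IsInitial X) := by
  let data := (Sheaf.locallySurjective J (Type)).factorizationData
    (Sheaf.locallyInjective J (Type)) (terminal.from X)
  have hi : Sheaf.IsLocallySurjective data.i := data.hi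
  have hp : Sheaf.IsLocallyInjective data.p := data.hp
  have hiepi : Epi data.i := inferInstance
  have hpmono : Mono data.p := Sheaf.mono_of_isLocallyInjective data.p
  have hZp : data.p = terminal.from data.Z := terminal.hom_ext _ _
  have hZmono : Mono (terminal.from data.Z) := by rw [← hZp]; exact hpmono
  rcases h1 data.Z hZmono with ht | ht
  · -- the support is initial, hence `X` is initial (strict initial objects)
    obtain ⟨t⟩ := ht
    have : IsIso data.i := t.isIso_to data.i
    exact Or.inr ⟨t.ofIso (asIso data.i).symm⟩
  · -- the support is terminal, hence `X → 1` is epi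
    obtain ⟨t⟩ := ht
    have hsplit : IsSplitEpi data.p :=
      IsSplitEpi.mk' ⟨t.from _, terminal.hom_ext _ _⟩
    have hpepi : Epi data.p := inferInstance
    have : Epi (data.i ≫ data.p) := epi_comp _ _
    rw [data.fac] at this
    exact Or.inl this

/-- If `0 ≇ 1` then no object is both well-supported and initial. -/
lemma stmt14_not_both
    (h0 : ¬ Nonempty ((⊥_ (Sheaf J (Type))) ≅ ⊤_ (Sheaf J (Type))))
    (X : Sheaf J (Type)) :
    ¬(Epi (terminal.from X) ∧ Nonempty (IsInitial X)) := by
  rintro ⟨hepi, ⟨t⟩⟩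
  have hm : Mono (terminal.from X) := by
    have := t.mono_from (t.to (⊤_ (Sheaf J (Type))))
    rwa [terminal.hom_ext (t.to _) (terminal.from X)] at this
  have : IsIso (terminal.from X) := isIso_of_mono_of_epi _
  exact h0 ⟨(initialIsInitial.uniqueUpToIso t).trans (asIso (terminal.from X))⟩

/-- The sheafified representables separate morphisms of sheaves. -/
lemma stmt14_sep {X Y : Sheaf J (Type)} (g h : X ⟶ Y)
    (H : ∀ (c : C) (u : (presheafToSheaf J (Type)).obj (yoneda.obj c) ⟶ X),
      u ≫ g = u ≫ h) : g = h := by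
  apply Sheaf.hom_ext
  ext ⟨c⟩ x
  let φ : yoneda.obj c ⟶ X.val := yonedaEquiv.symm x
  let u : (presheafToSheaf J (Type)).obj (yoneda.obj c) ⟶ X :=
    ((sheafificationAdjunction J (Type)).homEquiv _ _).symm φ
  have e := congrArg ((sheafificationAdjunction J (Type)).homEquiv _ _) (H c u)
  rw [Adjunction.homEquiv_naturality_right, Adjunction.homEquiv_naturality_right,
    Equiv.apply_symm_apply] at e
  have e' : φ ≫ g.hom = φ ≫ h.hom := e
  have := congrArg yonedaEquiv e'
  rwa [yonedaEquiv_comp, yonedaEquiv_comp, Equiv.apply_symm_apply] at this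

end Aux

theorem stmt14 {C : Type} [SmallCategory C] (J : GrothendieckTopology C) :
    -- (1) ↔ (2)
    (((¬ Nonempty ((⊥_ (Sheaf J (Type))) ≅ ⊤_ (Sheaf J (Type)))) ∧
        ∀ X : Sheaf J (Type), Mono (terminal.from X) →
          (Nonempty (IsInitial X) ∨ Nonempty (IsTerminal X))) ↔
      (∀ X : Sheaf J (Type),
        (Epi (terminal.from X) ∨ Nonempty (IsInitial X)) ∧
          ¬(Epi (terminal.from X) ∧ Nonempty (IsInitial X)))) ∧
    -- (1) ↔ (3)
    (((¬ Nonempty ((⊥_ (Sheaf J (Type))) ≅ ⊤_ (Sheaf J (Type)))) ∧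
        ∀ X : Sheaf J (Type), Mono (terminal.from X) →
          (Nonempty (IsInitial X) ∨ Nonempty (IsTerminal X))) ↔
      ((¬ Nonempty ((⊥_ (Sheaf J (Type))) ≅ ⊤_ (Sheaf J (Type)))) ∧
        ∃ (I : Type) (G : I → Sheaf J (Type)),
          (∀ i, Epi (terminal.from (G i))) ∧
            ∀ ⦃X Y : Sheaf J (Type)⦄ (g h : X ⟶ Y),
              (∀ (i : I) (u : G i ⟶ X), u ≫ g = u ≫ h) → g = h)) := by
  constructor
  · -- (1) ↔ (2)
    constructor
    · rintro ⟨h0, h1⟩ X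
      exact ⟨stmt14_ws_or_init J h1 X, stmt14_not_both J h0 X⟩
    · intro h2
      constructor
      · -- 0 ≇ 1
        rintro ⟨e⟩
        have ht : Epi (terminal.from (⊤_ (Sheaf J (Type)))) := by
          rw [terminal.hom_ext (terminal.from _) (𝟙 _)]; infer_instance
        exact (h2 (⊤_ (Sheaf J (Type)))).2 ⟨ht, ⟨initialIsInitial.ofIso e⟩⟩
      · intro X hm
        rcases (h2 X).1 with hepi | hinit
        · have : IsIso (terminal.from X) := isIso_of_mono_of_epi _
          exact Or.inr ⟨terminalIsTerminal.ofIso (asIso (terminal.from X)).symm⟩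
        · exact Or.inl hinit
  · -- (1) ↔ (3)
    constructor
    · rintro ⟨h0, h1⟩
      refine ⟨h0, {c : C // Epi (terminal.from ((presheafToSheaf J (Type)).obj (yoneda.obj c)))},
        fun i => (presheafToSheaf J (Type)).obj (yoneda.obj i.1), fun i => i.2, ?_⟩
      intro X Y g h H
      apply stmt14_sep J g h
      intro c u
      rcases stmt14_ws_or_init J h1 ((presheafToSheaf J (Type)).obj (yoneda.obj c)) with he | ht
      · exact H ⟨c, he⟩ u
      · exact ht.some.hom_ext _ _
    · rintro ⟨h0, I, G, hws, hsep⟩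
      refine ⟨h0, ?_⟩
      intro X hm
      by_cases hex : ∃ i : I, Nonempty (G i ⟶ X)
      · obtain ⟨i, ⟨u⟩⟩ := hex
        have he : Epi (u ≫ terminal.from X) := by
          rw [terminal.hom_ext (u ≫ terminal.from X) (terminal.from (G i))]
          exact hws i
        have : Epi (terminal.from X) := epi_of_epi u _
        have : IsIso (terminal.from X) := isIso_of_mono_of_epi _
        exact Or.inr ⟨terminalIsTerminal.ofIso (asIso (terminal.from X)).symm⟩
      · have hepi : Epi (initial.to X) :=
          ⟨fun g h _ => hsep g h (fun i u => absurd ⟨i, ⟨u⟩⟩ hex)⟩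
        have : IsIso (initial.to X) := isIso_of_mono_of_epi _
        exact Or.inl ⟨initialIsInitial.ofIso (asIso (initial.to X))⟩
end

section
/- Let L : E → F and R : F → E be an adjoint pair of functors (L ⊣ R) between categories E and F, each of which has a strict initial object. Then L reflects initial objects (i.e. if L(X) is initial then X is initial) if and only if R preserves the initial object (i.e. R applied to the initial object of F is initial in E). -/
open CategoryTheory CategoryTheory.Limits

universe v₁ v₂ u₁ u₂

theorem stmt15 {E : Type u₁} {F : Type u₂} [Category.{v₁} E] [Category.{v₂} F]
    [HasInitial E] [HasInitial F]
    [HasStrictInitialObjects E] [HasStrictInitialObjects F]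
    (L : E ⥤ F) (R : F ⥤ E) (adj : L ⊣ R) :
    (∀ X : E, Nonempty (IsInitial (L.obj X)) → Nonempty (IsInitial X)) ↔
      Nonempty (IsInitial (R.obj (⊥_ F))) := by
  constructor
  · intro h
    apply h
    haveI := initialIsInitial.isIso_to (adj.counit.app (⊥_ F))
    exact ⟨initialIsInitial.ofIso (asIso (adj.counit.app (⊥_ F))).symm⟩
  · rintro ⟨hR⟩ X ⟨hL⟩
    have f : X ⟶ R.obj (⊥_ F) := adj.homEquiv _ _ (hL.to (⊥_ F))
    have g : X ⟶ ⊥_ E := f ≫ hR.to (⊥_ E)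
    haveI := initialIsInitial.isIso_to g
    exact ⟨initialIsInitial.ofIso (asIso g).symm⟩
end

section
/- Let (C,J) be a small site. All the representable sheaves ℓ(C), for C an object of C, are supercompact in Sh(C,J) if and only if every J-covering sieve contains a morphism f such that the sieve generated by f alone is J-covering. Likewise, all the representable sheaves are compact in Sh(C,J) if and only if every J-covering sieve contains a finite family of morphisms generating a J-covering sieve. -/
open CategoryTheory CategoryTheory.Limits Opposite

universe w v u

namespace Stmt16Aux

variable {C : Type} [SmallCategory C] (J : GrothendieckTopology C)

/-- The representable sheaf. -/
noncomputable abbrev ell (c : C) : Sheaf J (Type) :=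
  (presheafToSheaf J (Type)).obj (yoneda.obj c)

/-- Action of `ℓ` on morphisms. -/
noncomputable abbrev ellm {d c : C} (f : d ⟶ c) : ell J d ⟶ ell J c :=
  (presheafToSheaf J (Type)).map (yoneda.map f)

/-- The sheafification unit at a representable. -/
noncomputable abbrev eta (c : C) : yoneda.obj c ⟶ (ell J c).val :=
  CategoryTheory.toSheafify J (yoneda.obj c)

/-- The generic element. -/
noncomputable abbrev x0 (c : C) : (ell J c).val.obj (op c) :=
  (eta J c).app (op c) (𝟙 c)

lemma x0_map {c d : C} (f : d ⟶ c) :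
    (ell J c).val.map f.op (x0 J c) = (eta J c).app (op d) f := by
  have h := FunctorToTypes.naturality (eta J c) f.op (𝟙 c)
  dsimp at h ⊢
  rw [← h]
  simp

lemma eta_comp {e c d' : C} (f' : e ⟶ c) (u : d' ⟶ e) :
    (ellm J f').hom.app (op d') ((eta J e).app (op d') u) = (eta J c).app (op d') (u ≫ f') := by
  have h := ConcreteCategory.congr_hom (congr_app (toSheafify_naturality J (yoneda.map f')) (op d')) u
  dsimp at h ⊢
  rw [← h]

lemma map_x0 {d c : C} (f : d ⟶ c) :
    (ell J c).val.map f.op (x0 J c) = (ellm J f).hom.app (op d) (x0 J d) := by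
  rw [x0_map]
  have := eta_comp J f (𝟙 d)
  rw [Category.id_comp] at this
  exact this.symm

variable {J}

/-- The element of `Y(c)` corresponding to a map `ℓ(c) ⟶ Y`. -/
noncomputable def elt {c : C} {Y : Sheaf J (Type)} (g : ell J c ⟶ Y) : Y.val.obj (op c) :=
  g.hom.app (op c) (x0 J c)

lemma elt_map {c d : C} (f : d ⟶ c) {Y : Sheaf J (Type)} (g : ell J c ⟶ Y) :
    Y.val.map f.op (elt g) = g.hom.app (op d) ((ell J c).val.map f.op (x0 J c)) :=
  (FunctorToTypes.naturality g.hom f.op (x0 J c)).symm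

lemma elt_inj {c : C} {Y : Sheaf J (Type)} {g h : ell J c ⟶ Y} (e : elt g = elt h) : g = h := by
  apply ((sheafificationAdjunction J (Type)).homEquiv (yoneda.obj c) Y).injective
  apply yonedaEquiv.injective
  simp only [yonedaEquiv_apply, Adjunction.homEquiv_unit]
  exact e

lemma sep_ext {Y : Sheaf J (Type)} {c : C} {y₁ y₂ : Y.val.obj (op c)} {S : Sieve c}
    (hS : S ∈ J c)
    (h : ∀ ⦃d : C⦄ ⦃f : d ⟶ c⦄, S.arrows f → Y.val.map f.op y₁ = Y.val.map f.op y₂) :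
    y₁ = y₂ :=
  (Presieve.IsSheaf.isSeparated
    ((isSheaf_iff_isSheaf_of_type J Y.val).1 Y.cond) S hS).ext h

/-- The sieve of morphisms along which `x` lifts through some member of the family. -/
def liftSieve {I : Type} {A : I → Sheaf J (Type)} {X : Sheaf J (Type)}
    (f : ∀ i, A i ⟶ X) {c : C} (x : X.val.obj (op c)) : Sieve c where
  arrows d g := ∃ (i : I) (a : (A i).val.obj (op d)),
    (f i).hom.app (op d) a = X.val.map g.op x
  downward_closed := by
    rintro d e g ⟨i, a, ha⟩ h
    refine ⟨i, (A i).val.map h.op a, ?_⟩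
    rw [FunctorToTypes.naturality, ha, ← FunctorToTypes.map_comp_apply, ← op_comp]

variable (J) in
/-- The pointwise sigma presheaf. -/
def sigmaP {I : Type} (A : I → Sheaf J (Type)) : Cᵒᵖ ⥤ Type where
  obj d := Σ i, (A i).val.obj d
  map g := TypeCat.ofHom fun a => ⟨a.1, (A a.1).val.map g a.2⟩
  map_id d := by ext a <;> simp
  map_comp g h := by ext a <;> simp

/-- The canonical map from the sigma presheaf. -/
def sigmaTo {I : Type} {A : I → Sheaf J (Type)} {X : Sheaf J (Type)} (f : ∀ i, A i ⟶ X) :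
    sigmaP J A ⟶ X.val where
  app d := TypeCat.ofHom fun a => (f a.1).hom.app d a.2
  naturality d e g := by
    ext a
    exact FunctorToTypes.naturality (f a.1).hom g a.2

lemma liftSieve_mem {I : Type} {A : I → Sheaf J (Type)} {X : Sheaf J (Type)}
    (f : ∀ i, A i ⟶ X)
    (hf : ∀ ⦃Y : Sheaf J (Type)⦄ (g h : X ⟶ Y), (∀ i, f i ≫ g = f i ≫ h) → g = h)
    {c : C} (x : X.val.obj (op c)) :
    liftSieve f x ∈ J c := by
  set P := sigmaP J A with hP
  set p := sigmaTo f with hp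
  set q : (presheafToSheaf J (Type)).obj P ⟶ X :=
    ((sheafificationAdjunction J (Type)).homEquiv P X).symm p with hq
  have hq2 : (sheafificationAdjunction J (Type)).homEquiv P X q = p :=
    Equiv.apply_symm_apply _ _
  have hepi : Epi q := by
    constructor
    intro Z g h w
    apply hf
    intro i
    have w' := congrArg ((sheafificationAdjunction J (Type)).homEquiv P Z) w
    rw [Adjunction.homEquiv_naturality_right, Adjunction.homEquiv_naturality_right, hq2] at w'
    apply (sheafToPresheaf J (Type)).map_injective
    ext d a
    exact ConcreteCategory.congr_hom (congr_fun (congrArg NatTrans.app w') d) (⟨i, a⟩ : Σ i, (A i).val.obj d)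
  haveI : Sheaf.IsLocallySurjective q := (Sheaf.isLocallySurjective_iff_epi q).2 hepi
  haveI hup : Presheaf.IsLocallySurjective J p := by
    have fac : CategoryTheory.toSheafify J P ≫ q.hom = p := by
      rw [← hq2, Adjunction.homEquiv_unit]; rfl
    rw [← fac]
    infer_instance
  refine J.superset_covering ?_ (Presheaf.imageSieve_mem J p x)
  rintro d g ⟨⟨i, a⟩, ha⟩
  exact ⟨i, a, ha⟩

lemma elt_comp {d c : C} (f : d ⟶ c) {Y : Sheaf J (Type)} (g : ell J c ⟶ Y) :
    Y.val.map f.op (elt g) = elt (ellm J f ≫ g) := by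
  rw [elt_map, map_x0]; rfl

variable (J) in
lemma generate_mem_of_lift {c : C} (R : Presieve c) (T : Sieve c) (hT : T ∈ J c)
    (hle : ∀ ⦃d : C⦄ (g : d ⟶ c), T.arrows g → ∃ (e : C) (f' : e ⟶ c) (_ : R f')
        (a : (ell J e).val.obj (op d)),
        (ellm J f').hom.app (op d) a = (ell J c).val.map g.op (x0 J c)) :
    Sieve.generate R ∈ J c := by
  refine J.transitive hT _ ?_
  intro d g hg
  obtain ⟨e, f', hf', a, ha⟩ := hle g hg
  refine J.transitive (Presheaf.imageSieve_mem J (eta J e) a) _ ?_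
  intro d' h hh
  obtain ⟨u, hu⟩ := hh
  have key : (ell J c).val.map (h ≫ g).op (x0 J c) = (eta J c).app (op d') (u ≫ f') := by
    rw [op_comp, FunctorToTypes.map_comp_apply, ← ha, ← FunctorToTypes.naturality]
    exact (congrArg ((ellm J f').hom.app (op d')) hu.symm).trans (eta_comp J f' u)
  have heq : Presheaf.equalizerSieve (F := yoneda.obj c) (h ≫ g) (u ≫ f') ∈ J d' :=
    Presheaf.equalizerSieve_mem J (eta J c) _ _ ((x0_map J (h ≫ g)).symm.trans key)
  rw [← Sieve.pullback_comp]
  refine J.superset_covering ?_ heq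
  rintro e' w hw
  exact ⟨e, w ≫ u, f', hf', by rw [Category.assoc]; exact hw.symm⟩

variable (J) in
lemma sieveFamily_jointlyEpic {c : C} (S : Sieve c) (hS : S ∈ J c)
    ⦃Y : Sheaf J (Type)⦄ (g h : ell J c ⟶ Y)
    (w : ∀ i : (Σ d : C, {f : d ⟶ c // S.arrows f}), ellm J i.2.1 ≫ g = ellm J i.2.1 ≫ h) :
    g = h := by
  apply elt_inj
  apply sep_ext hS
  intro d f hf
  rw [elt_comp, elt_comp, w ⟨d, f, hf⟩]

end Stmt16Aux

theorem stmt16 {C : Type} [SmallCategory C] (J : GrothendieckTopology C) :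
    ((∀ c : C, IsSupercompact ((presheafToSheaf J (Type)).obj (yoneda.obj c))) ↔
      ∀ (c : C) (S : Sieve c), S ∈ J c →
        ∃ (d : C) (f : d ⟶ c), S.arrows f ∧
          Sieve.generate (Presieve.singleton f) ∈ J c) ∧
    ((∀ c : C, IsCompactObj ((presheafToSheaf J (Type)).obj (yoneda.obj c))) ↔
      ∀ (c : C) (S : Sieve c), S ∈ J c →
        ∃ (n : ℕ) (ds : Fin n → C) (fs : ∀ i, ds i ⟶ c),
          (∀ i, S.arrows (fs i)) ∧
            Sieve.generate (Presieve.ofArrows ds fs) ∈ J c) := by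
  open Stmt16Aux in
  constructor
  · constructor
    · intro hsc c S hS
      have hje : JointlyEpic (fun i : (Σ d : C, {f : d ⟶ c // S.arrows f}) =>
          ellm J i.2.1) := fun Y g h w => sieveFamily_jointlyEpic J S hS g h w
      obtain ⟨⟨d, f, hf⟩, hepi⟩ := hsc c _ _ hje
      refine ⟨d, f, hf, ?_⟩
      haveI : Sheaf.IsLocallySurjective (ellm J f) :=
        (Sheaf.isLocallySurjective_iff_epi _).2 hepi
      apply generate_mem_of_lift J _ _ (Presheaf.imageSieve_mem J (ellm J f).hom (x0 J c))
      rintro d' g ⟨a, ha⟩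
      exact ⟨d, f, Presieve.singleton.mk, a, ha⟩
    · intro hcond c I A f hf
      obtain ⟨d, f₀, hf₀, hgen⟩ := hcond c _ (liftSieve_mem f hf (x0 J c))
      obtain ⟨i, a, ha⟩ := hf₀
      refine ⟨i, ?_⟩
      constructor
      intro Z g h w
      apply elt_inj
      apply sep_ext hgen
      rintro e w' ⟨d'', u, f', hsing, rfl⟩
      cases hsing
      have e1 : Z.val.map f₀.op (elt g) = Z.val.map f₀.op (elt h) := by
        rw [elt_map, elt_map, ← ha]
        exact ConcreteCategory.congr_hom (congrArg (fun t : A i ⟶ Z => (InducedCategory.Hom.hom t).app (op d)) w) a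
      rw [op_comp, FunctorToTypes.map_comp_apply, FunctorToTypes.map_comp_apply, e1]
  · constructor
    · intro hc c S hS
      have hje : JointlyEpic (fun i : (Σ d : C, {f : d ⟶ c // S.arrows f}) =>
          ellm J i.2.1) := fun Y g h w => sieveFamily_jointlyEpic J S hS g h w
      obtain ⟨s, hjes⟩ := hc c _ _ hje
      refine ⟨s.card, fun i => (s.equivFin.symm i).1.1, fun i => (s.equivFin.symm i).1.2.1,
        fun i => (s.equivFin.symm i).1.2.2, ?_⟩
      have hje2 : JointlyEpic (fun i : Fin s.card => ellm J (s.equivFin.symm i).1.2.1) := by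
        intro Y g h w
        apply hjes
        intro j
        have hj : s.equivFin.symm (s.equivFin j) = j := Equiv.symm_apply_apply _ _
        rw [← hj]
        exact w (s.equivFin j)
      apply generate_mem_of_lift J _ _ (liftSieve_mem _ hje2 (x0 J c))
      rintro d' g ⟨i, a, ha⟩
      exact ⟨_, _, Presieve.ofArrows.mk i, a, ha⟩
    · intro hcond c I A f hf
      classical
      obtain ⟨n, ds, fs, hfs, hgen⟩ := hcond c _ (liftSieve_mem f hf (x0 J c))
      choose j a ha using hfs
      refine ⟨Finset.image j Finset.univ, ?_⟩
      intro Z g h w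
      apply elt_inj
      apply sep_ext hgen
      rintro e w' ⟨d'', u, f', hof, rfl⟩
      obtain ⟨i⟩ := hof
      have e1 : Z.val.map (fs i).op (elt g) = Z.val.map (fs i).op (elt h) := by
        rw [elt_map, elt_map, ← ha i]
        exact ConcreteCategory.congr_hom (congrArg (fun t : A (j i) ⟶ Z => (InducedCategory.Hom.hom t).app (op (ds i)))
          (w ⟨j i, Finset.mem_image_of_mem j (Finset.mem_univ i)⟩)) (a i)
      rw [op_comp, FunctorToTypes.map_comp_apply, FunctorToTypes.map_comp_apply, e1]
end

section
/- Let T be a class of morphisms in a category C satisfying: (1) T contains all identities; (2) T is closed under composition; (3) for any f : C → D in T and any g : B → D in C, there is a commutative square with top edge f' : A → B belonging to T and sides completing the square to f and g; and (4) if a composite f ∘ g belongs to T then f belongs to T. Then T is stable under all pullbacks that exist in C: for any pullback square of f ∈ T along a morphism g, the morphism of the square opposite f also belongs to T. -/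
open CategoryTheory CategoryTheory.Limits

universe v u

theorem stmt17 {C : Type u} [Category.{v} C] (T : MorphismProperty C)
    -- (1) T contains all identities
    (h1 : ∀ X : C, T (𝟙 X))
    -- (2) T is closed under composition
    (h2 : ∀ {X Y Z : C} (f : X ⟶ Y) (g : Y ⟶ Z), T f → T g → T (f ≫ g))
    -- (3) stability: T-morphisms can be "pulled back" weakly along any morphism
    (h3 : ∀ {B D E : C} (f : E ⟶ D), T f → ∀ (g : B ⟶ D),
      ∃ (A : C) (f' : A ⟶ B) (g' : A ⟶ E), T f' ∧ f' ≫ g = g' ≫ f)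
    -- (4) push-forward property
    (h4 : ∀ {X Y Z : C} (g : X ⟶ Y) (f : Y ⟶ Z), T (g ≫ f) → T f) :
    -- conclusion: T is stable under all pullbacks that exist in C
    ∀ {P B D E : C} (f : E ⟶ D) (g : B ⟶ D) (p : P ⟶ B) (q : P ⟶ E),
      T f → IsPullback p q g f → T p := by
  intro P B D E f g p q hf hpb
  obtain ⟨A, f', g', hf', hcomm⟩ := h3 f hf g
  have hl : hpb.lift f' g' hcomm ≫ p = f' := hpb.lift_fst f' g' hcomm
  exact h4 _ _ (hl ▸ hf')
end

section
/- Let (C,J) and (D,K) be small sites and let f* : Sh(C,J) → Sh(D,K) be a comonadic left adjoint functor (the inverse image of a surjective geometric morphism). Then f* reflects supercompact objects, compact objects, and initial objects: if f*(X) is supercompact (respectively compact, respectively initial) then X is supercompact (respectively compact, respectively initial). -/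
open CategoryTheory CategoryTheory.Limits

universe w v u

section Aux

variable {C : Type u} [Category.{v} C] {D : Type*} [Category D]

/-- A faithful functor reflects joint epimorphicity. -/
lemma jointlyEpic_reflect (F : C ⥤ D) [F.Faithful] {I : Type w} {A : I → C} {X : C}
    (f : ∀ i, A i ⟶ X) (h : JointlyEpic fun i => F.map (f i)) : JointlyEpic f := by
  intro Y g g' hgg'
  apply F.map_injective
  exact h _ _ fun i => by rw [← F.map_comp, ← F.map_comp, hgg' i]

/-- If a family is jointly epic then the canonical map from the coproduct is epi. -/
lemma epi_desc_of_jointlyEpic {I : Type w} {A : I → C} [HasCoproduct A] {X : C}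
    (f : ∀ i, A i ⟶ X) (h : JointlyEpic f) : Epi (Sigma.desc f) := by
  constructor
  intro Y g g' e
  refine h g g' fun i => ?_
  have := Sigma.ι A i ≫= e
  simpa using this

/-- A colimit- and epi-preserving functor preserves joint epimorphicity. -/
lemma jointlyEpic_preserve (F : C ⥤ D) [PreservesColimitsOfSize.{w, w} F] [F.PreservesEpimorphisms]
    {I : Type w} {A : I → C} [HasCoproduct A] {X : C} (f : ∀ i, A i ⟶ X)
    (h : JointlyEpic f) : JointlyEpic fun i => F.map (f i) := by
  have hd : Epi (Sigma.desc f) := epi_desc_of_jointlyEpic f h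
  have hepi : Epi (F.map (Sigma.desc f)) := F.map_epi _
  intro Y g g' hgg'
  have hc := isColimitOfPreserves F (colimit.isColimit (Discrete.functor A))
  have heq : F.map (Sigma.desc f) ≫ g = F.map (Sigma.desc f) ≫ g' := by
    apply hc.hom_ext
    intro j
    simp only [Functor.mapCocone_ι_app, colimit.cocone_ι]
    rw [← Category.assoc, ← Category.assoc, ← F.map_comp]
    have hι : colimit.ι (Discrete.functor A) j ≫ Sigma.desc f = f j.as := by
      simp
    rw [hι]
    exact hgg' j.as
  exact (cancel_epi _).mp heq

end Aux

theorem stmt19 {C : Type} [SmallCategory C] {D : Type} [SmallCategory D]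
    (J : GrothendieckTopology C) (K : GrothendieckTopology D)
    (F : Sheaf J (Type) ⥤ Sheaf K (Type)) [ComonadicLeftAdjoint F]
    (X : Sheaf J (Type)) :
    (IsSupercompact (F.obj X) → IsSupercompact X) ∧
    (IsCompactObj (F.obj X) → IsCompactObj X) ∧
    (Nonempty (IsInitial (F.obj X)) → Nonempty (IsInitial X)) := by
  haveI : PreservesColimitsOfSize.{0, 0} F := (comonadicAdjunction F).leftAdjoint_preservesColimits
  haveI : F.Faithful := Functor.Faithful.of_iso (Comonad.comparisonForget (comonadicAdjunction F))
  haveI : F.ReflectsIsomorphisms := by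
    constructor
    intro A B f hf
    have h1 : IsIso ((Comonad.comparison (comonadicAdjunction F) ⋙ (comonadicAdjunction F).toComonad.forget).map f) := by
      rwa [NatIso.isIso_map_iff (Comonad.comparisonForget (comonadicAdjunction F)) f]
    exact isIso_of_reflects_iso f (Comonad.comparison (comonadicAdjunction F) ⋙ (comonadicAdjunction F).toComonad.forget)
  refine ⟨?_, ?_, ?_⟩
  · intro hs I A f hf
    obtain ⟨i, hi⟩ := hs _ (fun i => F.map (f i)) (jointlyEpic_preserve F f hf)
    exact ⟨i, F.epi_of_epi_map hi⟩
  · intro hc I A f hf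
    obtain ⟨s, hs⟩ := hc _ (fun i => F.map (f i)) (jointlyEpic_preserve F f hf)
    exact ⟨s, jointlyEpic_reflect F _ hs⟩
  · rintro ⟨hI⟩
    have h0 : IsInitial (F.obj (⊥_ (Sheaf J (Type)))) :=
      IsInitial.isInitialObj F _ initialIsInitial
    haveI : IsIso (F.map (initial.to X)) :=
      ⟨hI.to _, h0.hom_ext _ _, hI.hom_ext _ _⟩
    haveI : IsIso (initial.to X) := isIso_of_reflects_iso (initial.to X) F
    exact ⟨IsInitial.ofIso initialIsInitial (asIso (initial.to X))⟩
end
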